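/- Every skeletal Rees category embeds in its universal groupoid: if C is a skeletal left Rees category that is also right cancellative, then the canonical functor ι : C → U(C) from C to its universal groupoid (the localization of C at all of its arrows, i.e. the groupoid with the universal property that every functor from C to a groupoid factors uniquely through ι) is faithful, i.e. injective on arrows between any fixed pair of identities. -/

import Mathlib

open CategoryTheory

universe v u

variable {C : Type u} [Category.{v} C]

/-- The set of all arrows of a category, as a sigma type. -/
abbrev CatArr (C : Type u) [Category.{v} C] : Type (max u v) := Σ (X : C) (Y : C), X ⟶ Y

/-- An arrow is an atom if it is not invertible and in any factorization one factor
is invertible. -/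
def IsAtomArrow {X Y : C} (a : X ⟶ Y) : Prop :=
  ¬ IsIso a ∧ ∀ ⦃Z : C⦄ (b : X ⟶ Z) (c : Z ⟶ Y), a = b ≫ c → IsIso b ∨ IsIso c

/-- The principal right ideal `aC` generated by an arrow `a`. -/
def rIdeal {X Y : C} (a : X ⟶ Y) : Set (CatArr C) :=
  { p | ∃ (Z : C) (b : Y ⟶ Z), p = ⟨X, Z, a ≫ b⟩ }

/-- The principal left ideal `Ca` generated by an arrow `a`. -/
def lIdeal {X Y : C} (a : X ⟶ Y) : Set (CatArr C) :=
  { p | ∃ (Z : C) (b : Z ⟶ X), p = ⟨Z, Y, b ≫ a⟩ }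

/-- The principal two-sided ideal `CaC` generated by an arrow `a`. -/
def twoIdeal {X Y : C} (a : X ⟶ Y) : Set (CatArr C) :=
  { p | ∃ (W Z : C) (b : W ⟶ X) (c : Y ⟶ Z), p = ⟨W, Z, b ≫ a ≫ c⟩ }

/-- A category is left cancellative if `ax = ay` implies `x = y`. -/
def LeftCancellativeCat (C : Type u) [Category.{v} C] : Prop :=
  ∀ ⦃X Y Z : C⦄ (a : X ⟶ Y) (x y : Y ⟶ Z), a ≫ x = a ≫ y → x = y

/-- A category is right cancellative if `xa = ya` implies `x = y`. -/
def RightCancellativeCat (C : Type u) [Category.{v} C] : Prop :=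
  ∀ ⦃X Y Z : C⦄ (x y : X ⟶ Y) (a : Y ⟶ Z), x ≫ a = y ≫ a → x = y

/-- A category is right rigid if principal right ideals that intersect are comparable. -/
def RightRigid (C : Type u) [Category.{v} C] : Prop :=
  ∀ ⦃X Y X' Y' : C⦄ (a : X ⟶ Y) (b : X' ⟶ Y'),
    (rIdeal a ∩ rIdeal b).Nonempty → rIdeal a ⊆ rIdeal b ∨ rIdeal b ⊆ rIdeal a

/-- A category is equidivisible if every equality `ab = cd` admits an intermediate arrow. -/
def Equidivisible (C : Type u) [Category.{v} C] : Prop :=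
  ∀ ⦃W X Y Z : C⦄ (a : W ⟶ X) (b : X ⟶ Z) (c : W ⟶ Y) (d : Y ⟶ Z),
    a ≫ b = c ≫ d →
      (∃ u : Y ⟶ X, a = c ≫ u ∧ d = u ≫ b) ∨ (∃ v : X ⟶ Y, c = a ≫ v ∧ b = v ≫ d)

/-- A length functor on a category: additive on composition, zero exactly on invertible
arrows, one exactly on atoms. -/
structure LengthFunctor (C : Type u) [Category.{v} C] where
  len : ∀ ⦃X Y : C⦄, (X ⟶ Y) → ℕ
  len_comp : ∀ ⦃X Y Z : C⦄ (f : X ⟶ Y) (g : Y ⟶ Z), len (f ≫ g) = len f + len g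
  len_eq_zero_iff : ∀ ⦃X Y : C⦄ (f : X ⟶ Y), len f = 0 ↔ IsIso f
  len_eq_one_iff : ∀ ⦃X Y : C⦄ (f : X ⟶ Y), len f = 1 ↔ IsAtomArrow f

/-- A subset of the arrows is a principal right ideal if it has the form `xC`. -/
def IsPrincipalRightIdeal (S : Set (CatArr C)) : Prop :=
  ∃ (U V : C) (x : U ⟶ V), S = rIdeal x

/-- The interval `[aC, bC]` of principal right ideals between `aC` and `bC`. -/
def rInterval {X Y Z W : C} (a : X ⟶ Y) (b : Z ⟶ W) : Set (Set (CatArr C)) :=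
  { S | IsPrincipalRightIdeal S ∧ rIdeal a ⊆ S ∧ S ⊆ rIdeal b }

/-- A left Rees category: left cancellative, right rigid, and each principal right
ideal is properly contained in only finitely many principal right ideals. -/
def IsLeftReesCategory (C : Type u) [Category.{v} C] : Prop :=
  LeftCancellativeCat C ∧ RightRigid C ∧
    ∀ ⦃X Y : C⦄ (a : X ⟶ Y),
      { S : Set (CatArr C) | IsPrincipalRightIdeal S ∧ rIdeal a ⊂ S }.Finite

/-- A category is skeletal if every invertible arrow has equal domain and codomain. -/
def SkeletalCat (C : Type u) [Category.{v} C] : Prop :=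
  ∀ ⦃X Y : C⦄ (g : X ⟶ Y), IsIso g → X = Y


namespace SRees

attribute [local instance] Classical.propDecidable

variable {C : Type u} [Category.{v} C]

/-- Bundled hypotheses. -/
structure Hyp (C : Type u) [Category.{v} C] : Prop where
  lc : LeftCancellativeCat C
  rr : RightRigid C
  fin : ∀ ⦃X Y : C⦄ (a : X ⟶ Y),
      { S : Set (CatArr C) | IsPrincipalRightIdeal S ∧ rIdeal a ⊂ S }.Finite
  rc : RightCancellativeCat C

theorem isIso_of_right_inv (hh : Hyp C) {X Y : C} {a : X ⟶ Y} {b : Y ⟶ X}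
    (h : a ≫ b = 𝟙 X) : IsIso a := by
  refine ⟨b, h, ?_⟩
  apply hh.lc a
  rw [← Category.assoc, h, Category.id_comp, Category.comp_id]

theorem isIso_of_left_inv (hh : Hyp C) {X Y : C} {a : X ⟶ Y} {b : Y ⟶ X}
    (h : b ≫ a = 𝟙 Y) : IsIso a := by
  have he : (a ≫ b) ≫ (a ≫ b) = (a ≫ b) ≫ 𝟙 X := by
    simp only [Category.assoc, Category.comp_id]
    rw [← Category.assoc b a, h, Category.id_comp]
  have h1 : a ≫ b = 𝟙 X := hh.lc (a ≫ b) _ _ he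
  exact isIso_of_right_inv hh h1

theorem isIso_left_of_comp (hh : Hyp C) {X Y Z : C} {a : X ⟶ Y} {b : Y ⟶ Z}
    (h : IsIso (a ≫ b)) : IsIso a := by
  refine isIso_of_right_inv hh (b := b ≫ inv (a ≫ b)) ?_
  rw [← Category.assoc]; simp

theorem isIso_right_of_comp (hh : Hyp C) {X Y Z : C} {a : X ⟶ Y} {b : Y ⟶ Z}
    (h : IsIso (a ≫ b)) : IsIso b := by
  have ha : IsIso a := isIso_left_of_comp hh h
  have : b = inv a ≫ (a ≫ b) := by simp
  rw [this]; infer_instance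

theorem not_isIso_comp_left (hh : Hyp C) {X Y Z : C} {a : X ⟶ Y} {b : Y ⟶ Z}
    (h : ¬ IsIso a) : ¬ IsIso (a ≫ b) := fun hi => h (isIso_left_of_comp hh hi)

theorem not_isIso_comp_right (hh : Hyp C) {X Y Z : C} {a : X ⟶ Y} {b : Y ⟶ Z}
    (h : ¬ IsIso b) : ¬ IsIso (a ≫ b) := fun hi => h (isIso_right_of_comp hh hi)

theorem self_mem_rIdeal {X Y : C} (a : X ⟶ Y) : (⟨X, Y, a⟩ : CatArr C) ∈ rIdeal a :=
  ⟨Y, 𝟙 Y, by simp [rIdeal]⟩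

theorem rIdeal_comp_sub {X Y Z : C} (a : X ⟶ Y) (b : Y ⟶ Z) :
    rIdeal (a ≫ b) ⊆ rIdeal a := by
  rintro p ⟨M, c, rfl⟩
  exact ⟨M, b ≫ c, by simp [rIdeal]⟩

theorem dvd_of_rIdeal_sub {X A M : C} {a : X ⟶ A} {c : X ⟶ M}
    (h : rIdeal a ⊆ rIdeal c) : ∃ u : M ⟶ A, a = c ≫ u := by
  have := h (self_mem_rIdeal a)
  obtain ⟨Z, u, he⟩ := this
  injection he with h1 h2
  injection h2 with h3 h4
  subst h3
  exact ⟨u, eq_of_heq h4⟩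

theorem rIdeal_sub_of_eq {X A M : C} {a : X ⟶ A} {c : X ⟶ M} (u : M ⟶ A)
    (h : a = c ≫ u) : rIdeal a ⊆ rIdeal c := h ▸ rIdeal_comp_sub c u

theorem rIdeal_chain (hh : Hyp C) {X A B : C} {a : X ⟶ A} {b : X ⟶ B}
    {M N : C} {c : M ⟶ N} (hab : rIdeal a ⊆ rIdeal c)
    {M' N' : C} {d : M' ⟶ N'} (hab' : rIdeal a ⊆ rIdeal d) :
    rIdeal c ⊆ rIdeal d ∨ rIdeal d ⊆ rIdeal c :=
  hh.rr c d ⟨⟨X, A, a⟩, hab (self_mem_rIdeal a), hab' (self_mem_rIdeal a)⟩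

theorem equidiv (hh : Hyp C) : Equidivisible C := by
  intro W X Y Z a b c d h
  have hmem : (⟨W, Z, a ≫ b⟩ : CatArr C) ∈ rIdeal a ∩ rIdeal c := by
    refine ⟨⟨Z, b, rfl⟩, ⟨Z, d, ?_⟩⟩
    rw [h]
  rcases hh.rr a c ⟨_, hmem⟩ with hs | hs
  · obtain ⟨u, hu⟩ := dvd_of_rIdeal_sub hs
    refine Or.inl ⟨u, hu, ?_⟩
    apply hh.lc c
    rw [← h, hu, Category.assoc]
  · obtain ⟨v, hv⟩ := dvd_of_rIdeal_sub hs
    refine Or.inr ⟨v, hv, ?_⟩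
    apply hh.lc a
    rw [h, hv, Category.assoc]

/-- Common left divisors of `p` and `q` are invertible. -/
def LCop {Z A B : C} (p : Z ⟶ A) (q : Z ⟶ B) : Prop :=
  ∀ ⦃M : C⦄ (d : Z ⟶ M) (f : M ⟶ A) (g : M ⟶ B), p = d ≫ f → q = d ≫ g → IsIso d

/-- Common right divisors of `p` and `q` are invertible. -/
def RCop {Z A B : C} (p : A ⟶ Z) (q : B ⟶ Z) : Prop :=
  ∀ ⦃M : C⦄ (d : M ⟶ Z) (f : A ⟶ M) (g : B ⟶ M), p = f ≫ d → q = g ≫ d → IsIso d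

/-- A maximal common left divisor decomposition. -/
structure MCLD {Z A B : C} (p : Z ⟶ A) (q : Z ⟶ B) where
  {mid : C}
  d : Z ⟶ mid
  q₁ : mid ⟶ A
  q₂ : mid ⟶ B
  h₁ : p = d ≫ q₁
  h₂ : q = d ≫ q₂
  cop : LCop q₁ q₂

/-- A maximal common right divisor decomposition. -/
structure MCRD {Z A B : C} (p : A ⟶ Z) (q : B ⟶ Z) where
  {mid : C}
  d : mid ⟶ Z
  q₁ : A ⟶ mid
  q₂ : B ⟶ mid
  h₁ : p = q₁ ≫ d
  h₂ : q = q₂ ≫ d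
  cop : RCop q₁ q₂

theorem finite_over (hh : Hyp C) {X A : C} (a : X ⟶ A) :
    { S : Set (CatArr C) | IsPrincipalRightIdeal S ∧ rIdeal a ⊆ S }.Finite := by
  have : { S : Set (CatArr C) | IsPrincipalRightIdeal S ∧ rIdeal a ⊆ S } ⊆
      insert (rIdeal a) { S : Set (CatArr C) | IsPrincipalRightIdeal S ∧ rIdeal a ⊂ S } := by
    rintro S ⟨h1, h2⟩
    by_cases he : S = rIdeal a
    · exact Or.inl he
    · exact Or.inr ⟨h1, h2, fun hc => he (le_antisymm hc h2)⟩
  exact Set.Finite.subset ((hh.fin a).insert _) this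

theorem exists_mcld (hh : Hyp C) {Z A B : C} (p : Z ⟶ A) (q : Z ⟶ B) :
    Nonempty (MCLD p q) := by
  classical
  set I : Set (Set (CatArr C)) :=
    { S | ∃ (M : C) (d : Z ⟶ M) (f : M ⟶ A) (g : M ⟶ B),
        p = d ≫ f ∧ q = d ≫ g ∧ S = rIdeal d } with hI
  have hIfin : I.Finite := by
    apply (finite_over hh p).subset
    rintro S ⟨M, d, f, g, h1, h2, rfl⟩
    exact ⟨⟨Z, M, d, rfl⟩, rIdeal_sub_of_eq f h1⟩
  have hIne : I.Nonempty := ⟨rIdeal (𝟙 Z), Z, 𝟙 Z, p, q, by simp, by simp, rfl⟩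
  obtain ⟨S₀, hS₀, hmin⟩ := Set.Finite.exists_minimalFor id I hIfin hIne
  obtain ⟨M, d, f, g, h1, h2, rfl⟩ := hS₀
  refine ⟨⟨d, f, g, h1, h2, ?_⟩⟩
  intro M' e f' g' hf hg
  have hmem : rIdeal (d ≫ e) ∈ I :=
    ⟨M', d ≫ e, f', g', by rw [h1, hf, Category.assoc], by rw [h2, hg, Category.assoc], rfl⟩
  have hsub : rIdeal (d ≫ e) ⊆ rIdeal d := rIdeal_comp_sub d e
  have heq : rIdeal d = rIdeal (d ≫ e) := le_antisymm (hmin hmem hsub) hsub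
  have hle : rIdeal d ⊆ rIdeal (d ≫ e) := le_of_eq heq
  obtain ⟨t, ht⟩ := dvd_of_rIdeal_sub hle
  have het : 𝟙 M = e ≫ t := by
    apply hh.lc d
    rw [Category.comp_id, ← Category.assoc]
    exact ht
  exact isIso_of_right_inv hh het.symm

theorem exists_mcrd (hh : Hyp C) {Z A B : C} (p : A ⟶ Z) (q : B ⟶ Z) :
    Nonempty (MCRD p q) := by
  classical
  set I : Set (Set (CatArr C)) :=
    { S | ∃ (M : C) (f : A ⟶ M) (g : B ⟶ M) (d : M ⟶ Z),
        p = f ≫ d ∧ q = g ≫ d ∧ S = rIdeal f } with hI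
  have hIfin : I.Finite := by
    apply (finite_over hh p).subset
    rintro S ⟨M, f, g, d, h1, h2, rfl⟩
    exact ⟨⟨A, M, f, rfl⟩, rIdeal_sub_of_eq d h1⟩
  have hIne : I.Nonempty := ⟨rIdeal p, Z, p, q, 𝟙 Z, by simp, by simp, rfl⟩
  obtain ⟨S₀, hS₀, hmax⟩ := Set.Finite.exists_maximalFor id I hIfin hIne
  obtain ⟨M, f, g, d, h1, h2, rfl⟩ := hS₀
  refine ⟨⟨d, f, g, h1, h2, ?_⟩⟩
  intro M' e f' g' hf hg
  have hmem : rIdeal f' ∈ I :=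
    ⟨M', f', g', e ≫ d, by rw [h1, hf, Category.assoc], by rw [h2, hg, Category.assoc], rfl⟩
  have hsub : rIdeal f ⊆ rIdeal f' := rIdeal_sub_of_eq e hf
  have heq : rIdeal f = rIdeal f' := le_antisymm hsub (hmax hmem hsub)
  have hle : rIdeal f' ⊆ rIdeal f := le_of_eq heq.symm
  obtain ⟨t, ht⟩ := dvd_of_rIdeal_sub hle
  have het : 𝟙 M' = e ≫ t := by
    apply hh.lc f'
    rw [Category.comp_id, ← Category.assoc, ← hf]
    exact ht
  exact isIso_of_right_inv hh het.symm

/-- Maximality of a coprime left-divisor decomposition. -/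
theorem mcld_max (hh : Hyp C) {Z A B : C} {p : Z ⟶ A} {q : Z ⟶ B} (m : MCLD p q)
    {M : C} (f : Z ⟶ M) (f₁ : M ⟶ A) (f₂ : M ⟶ B)
    (h1 : p = f ≫ f₁) (h2 : q = f ≫ f₂) : ∃ t : M ⟶ m.mid, m.d = f ≫ t := by
  rcases equidiv hh f f₁ m.d m.q₁ (h1.symm.trans m.h₁) with ⟨u, hu1, hu2⟩ | ⟨v, hv1, hv2⟩
  · -- f = m.d ≫ u and m.q₁ = u ≫ f₁
    have hq2 : m.q₂ = u ≫ f₂ := by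
      apply hh.lc m.d
      rw [← Category.assoc, ← hu1, ← h2]
      exact m.h₂.symm
    have hiso : IsIso u := m.cop u f₁ f₂ hu2 hq2
    exact ⟨inv u, by rw [hu1]; simp⟩
  · exact ⟨v, hv1⟩

/-- Maximality of a coprime right-divisor decomposition. -/
theorem mcrd_max (hh : Hyp C) {Z A B : C} {p : A ⟶ Z} {q : B ⟶ Z} (m : MCRD p q)
    {M : C} (f : M ⟶ Z) (f₁ : A ⟶ M) (f₂ : B ⟶ M)
    (h1 : p = f₁ ≫ f) (h2 : q = f₂ ≫ f) : ∃ t : m.mid ⟶ M, m.d = t ≫ f := by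
  rcases equidiv hh f₁ f m.q₁ m.d (h1.symm.trans m.h₁) with ⟨u, hu1, hu2⟩ | ⟨v, hv1, hv2⟩
  · -- f₁ = m.q₁ ≫ u, m.d = u ≫ f
    exact ⟨u, hu2⟩
  · -- m.q₁ = f₁ ≫ v, f = v ≫ m.d
    have hq2 : m.q₂ = f₂ ≫ v := by
      apply hh.rc _ _ m.d
      rw [Category.assoc, ← hv2, ← h2]
      exact m.h₂.symm
    have hiso : IsIso v := m.cop v f₁ f₂ hv1 hq2
    exact ⟨inv v, by rw [hv2, ← Category.assoc]; simp⟩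

/-- Uniqueness (up to unit) of maximal common left divisor decompositions. -/
theorem mcld_unique (hh : Hyp C) {Z A B : C} {p : Z ⟶ A} {q : Z ⟶ B}
    (m : MCLD p q) {M : C} (D : Z ⟶ M) (f₁ : M ⟶ A) (f₂ : M ⟶ B)
    (h1 : p = D ≫ f₁) (h2 : q = D ≫ f₂) (hcop : LCop f₁ f₂) :
    ∃ ρ : M ⟶ m.mid, IsIso ρ ∧ m.d = D ≫ ρ ∧ f₁ = ρ ≫ m.q₁ ∧ f₂ = ρ ≫ m.q₂ := by
  obtain ⟨t, ht⟩ := mcld_max hh m D f₁ f₂ h1 h2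
  obtain ⟨s, hs⟩ := mcld_max hh ⟨D, f₁, f₂, h1, h2, hcop⟩ m.d m.q₁ m.q₂ m.h₁ m.h₂
  -- ht : m.d = D ≫ t, hs : D = m.d ≫ s
  have hts : 𝟙 M = t ≫ s := by
    apply hh.lc D
    rw [Category.comp_id, ← Category.assoc, ← ht]
    exact hs
  have hiso : IsIso t := isIso_of_right_inv hh hts.symm
  refine ⟨t, hiso, ht, ?_, ?_⟩
  · apply hh.lc D
    rw [← Category.assoc, ← ht]
    exact h1.symm.trans m.h₁
  · apply hh.lc D
    rw [← Category.assoc, ← ht]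
    exact h2.symm.trans m.h₂

/-- Uniqueness (up to unit) of maximal common right divisor decompositions. -/
theorem mcrd_unique (hh : Hyp C) {Z A B : C} {p : A ⟶ Z} {q : B ⟶ Z}
    (m : MCRD p q) {M : C} (D : M ⟶ Z) (f₁ : A ⟶ M) (f₂ : B ⟶ M)
    (h1 : p = f₁ ≫ D) (h2 : q = f₂ ≫ D) (hcop : RCop f₁ f₂) :
    ∃ ρ : m.mid ⟶ M, IsIso ρ ∧ m.d = ρ ≫ D ∧ f₁ = m.q₁ ≫ ρ ∧ f₂ = m.q₂ ≫ ρ := by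
  obtain ⟨t, ht⟩ := mcrd_max hh m D f₁ f₂ h1 h2
  obtain ⟨s, hs⟩ := mcrd_max hh ⟨D, f₁, f₂, h1, h2, hcop⟩ m.d m.q₁ m.q₂ m.h₁ m.h₂
  -- ht : m.d = t ≫ D, hs : D = s ≫ m.d
  have hts : 𝟙 M = s ≫ t := by
    apply hh.rc _ _ D
    rw [Category.id_comp, Category.assoc, ← ht]
    exact hs
  have hiso : IsIso t := isIso_of_left_inv hh hts.symm
  refine ⟨t, hiso, ht, ?_, ?_⟩
  · apply hh.rc _ _ D
    rw [Category.assoc, ← ht]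
    exact h1.symm.trans m.h₁
  · apply hh.rc _ _ D
    rw [Category.assoc, ← ht]
    exact h2.symm.trans m.h₂

noncomputable def mcld (hh : Hyp C) {Z A B : C} (p : Z ⟶ A) (q : Z ⟶ B) : MCLD p q :=
  Classical.choice (exists_mcld hh p q)

noncomputable def mcrd (hh : Hyp C) {Z A B : C} (p : A ⟶ Z) (q : B ⟶ Z) : MCRD p q :=
  Classical.choice (exists_mcrd hh p q)

/-! ### Coprimality preservation lemmas -/

theorem LCop_left_div {Z A B B' : C} {y : Z ⟶ A} {x : Z ⟶ B} (h : LCop y x)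
    {x₁ : Z ⟶ B'} {c : B' ⟶ B} (hx : x = x₁ ≫ c) : LCop y x₁ := by
  intro M d f g h1 h2
  exact h d f (g ≫ c) h1 (by rw [hx, h2, Category.assoc])

theorem RCop_right_div {Z A B B' : C} {x : A ⟶ Z} {y : B ⟶ Z} (h : RCop x y)
    {y' : B' ⟶ Z} {m : B ⟶ B'} (hy : y = m ≫ y') : RCop x y' := by
  intro M d f g h1 h2
  exact h d f (m ≫ g) h1 (by rw [hy, h2, Category.assoc])

theorem LCop_symm {Z A B : C} {y : Z ⟶ A} {x : Z ⟶ B} (h : LCop y x) : LCop x y :=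
  fun _ d f g h1 h2 => h d g f h2 h1

theorem RCop_symm {Z A B : C} {x : A ⟶ Z} {y : B ⟶ Z} (h : RCop x y) : RCop y x :=
  fun _ d f g h1 h2 => h d g f h2 h1

theorem LCop_unit_right {Z A B B' : C} {y : Z ⟶ A} {x : Z ⟶ B} (h : LCop y x)
    {x' : Z ⟶ B'} {g : B ⟶ B'} (hg : IsIso g) (hx : x' = x ≫ g) : LCop y x' := by
  intro M d f k h1 h2
  refine h d f (k ≫ inv g) h1 ?_
  rw [← Category.assoc, ← h2, hx]
  simp

theorem RCop_unit_left {Z A B B' : C} {x : A ⟶ Z} {y : B ⟶ Z} (h : RCop x y)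
    {y' : B' ⟶ Z} {g : B' ⟶ B} (hg : IsIso g) (hy : y' = g ≫ y) : RCop x y' := by
  intro M d f k h1 h2
  refine h d f (inv g ≫ k) h1 ?_
  rw [Category.assoc, ← h2, hy]
  simp

theorem LCop_extend (hh : Hyp C) {Z A B B' : C} {y : Z ⟶ A} {x : Z ⟶ B}
    (h : LCop y x) (hx : ¬ IsIso x) (b : B ⟶ B') : LCop y (x ≫ b) := by
  intro M d f g h1 h2
  rcases equidiv hh d g x b h2.symm with ⟨u, hu1, hu2⟩ | ⟨v, hv1, hv2⟩
  · -- d = x ≫ u, b = u ≫ g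
    exact absurd (h x (u ≫ f) (𝟙 B) (by rw [h1, hu1, Category.assoc]) (by simp)) hx
  · -- x = d ≫ v, g = v ≫ b
    exact h d f v h1 hv1

theorem RCop_extend (hh : Hyp C) {Z A B B' : C} {x : A ⟶ Z} {y : B ⟶ Z}
    (h : RCop x y) (hy : ¬ IsIso y) (b : B' ⟶ B) : RCop x (b ≫ y) := by
  intro M d f g h1 h2
  rcases equidiv hh b y g d h2 with ⟨u, hu1, hu2⟩ | ⟨v, hv1, hv2⟩
  · -- b = g ≫ u, d = u ≫ y
    exact absurd (h y (f ≫ u) (𝟙 B) (by rw [h1, hu2, ← Category.assoc]) (by simp)) hy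
  · -- g = b ≫ v, y = v ≫ d
    exact h d f v h1 hv2

/-! ### Words -/

inductive W : C → C → Type (max u v)
  | nil (X : C) : W X X
  | pos {X Y Z : C} (w : W X Y) (a : Y ⟶ Z) : W X Z
  | neg {X Y Z : C} (w : W X Y) (b : Z ⟶ Y) : W X Z

inductive Red : ∀ {X Y : C}, W X Y → Prop
  | nil (X : C) : Red (W.nil X)
  | pos_nil {X Y : C} {a : X ⟶ Y} (ha : ¬ IsIso a) : Red (W.pos (W.nil X) a)
  | neg_nil {X Y : C} {b : Y ⟶ X} (hb : ¬ IsIso b) : Red (W.neg (W.nil X) b)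
  | pos_neg {X Y Z T : C} {v : W X Y} {y : Z ⟶ Y} {x : Z ⟶ T}
      (hw : Red (W.neg v y)) (hx : ¬ IsIso x) (hcop : LCop y x) :
      Red (W.pos (W.neg v y) x)
  | neg_pos {X Y Z T : C} {v : W X Y} {x : Y ⟶ Z} {y : T ⟶ Z}
      (hw : Red (W.pos v x)) (hy : ¬ IsIso y) (hcop : RCop x y) :
      Red (W.neg (W.pos v x) y)

/-- Unit-rescaling relation between words, with a trailing unit `h`. -/
inductive Sh : ∀ {X A B : C}, W X A → W X B → (A ⟶ B) → Prop
  | nil (X : C) : Sh (W.nil X) (W.nil X) (𝟙 X)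
  | pos {X Y Y' Z Z' : C} {v : W X Y} {v' : W X Y'} {g : Y ⟶ Y'}
      (hs : Sh v v' g) {x : Y ⟶ Z} {x' : Y' ⟶ Z'} {h : Z ⟶ Z'} (hiso : IsIso h)
      (he : x ≫ h = g ≫ x') : Sh (W.pos v x) (W.pos v' x') h
  | neg {X Y Y' Z Z' : C} {v : W X Y} {v' : W X Y'} {g : Y ⟶ Y'}
      (hs : Sh v v' g) {y : Z ⟶ Y} {y' : Z' ⟶ Y'} {h : Z ⟶ Z'} (hiso : IsIso h)
      (he : h ≫ y' = y ≫ g) : Sh (W.neg v y) (W.neg v' y') h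

theorem Sh.iso {X A B : C} {w : W X A} {w' : W X B} {g : A ⟶ B}
    (h : Sh w w' g) : IsIso g := by
  induction h with
  | nil => infer_instance
  | pos _ hiso _ _ => exact hiso
  | neg _ hiso _ _ => exact hiso

theorem Sh.refl {X A : C} (w : W X A) : Sh w w (𝟙 A) := by
  induction w with
  | nil => exact Sh.nil _
  | pos v x ih => exact Sh.pos ih inferInstance (by simp)
  | neg v y ih => exact Sh.neg ih inferInstance (by simp)

theorem Sh.symm_aux {X A B : C} {w : W X A} {w' : W X B} {g : A ⟶ B}
    (h : Sh w w' g) : ∀ {g'' : B ⟶ A}, g ≫ g'' = 𝟙 A → g'' ≫ g = 𝟙 B →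
    Sh w' w g'' := by
  induction h with
  | nil =>
      intro g'' h1 h2
      have : g'' = 𝟙 _ := by simpa using h1
      subst this
      exact Sh.nil _
  | pos hs hiso he ih =>
      intro g'' h1 h2
      haveI := hs.iso
      rename_i Y Y' Z Z' v v' g x x' h
      haveI : IsIso g'' := ⟨h, h2, h1⟩
      refine Sh.pos (ih (g'' := inv g) (by simp) (by simp)) inferInstance ?_
      have hx' : x' = inv g ≫ (x ≫ h) := by rw [he]; simp
      rw [hx', Category.assoc, Category.assoc, h1, Category.comp_id]
  | neg hs hiso he ih =>
      intro g'' h1 h2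
      haveI := hs.iso
      rename_i Y Y' Z Z' v v' g y y' h
      haveI : IsIso g'' := ⟨h, h2, h1⟩
      refine Sh.neg (ih (g'' := inv g) (by simp) (by simp)) inferInstance ?_
      have hy' : y' = inv h ≫ (y ≫ g) := by rw [← he]; simp
      have hg'' : inv h = g'' := IsIso.inv_eq_of_hom_inv_id h1
      rw [hy', hg'']
      simp

theorem Sh.symm' {X A B : C} {w : W X A} {w' : W X B} {g : A ⟶ B}
    (h : Sh w w' g) : Sh w' w (inv g (I := h.iso)) := by
  haveI := h.iso
  exact h.symm_aux (by simp) (by simp)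

theorem Sh.trans' {X A B D : C} {w : W X A} {w' : W X B} {w'' : W X D}
    {g : A ⟶ B} {g' : B ⟶ D} (h1 : Sh w w' g) (h2 : Sh w' w'' g') :
    Sh w w'' (g ≫ g') := by
  induction h1 generalizing D with
  | nil =>
      cases h2 with
      | nil => simpa using Sh.nil _
  | pos hs hiso he ih =>
      cases h2 with
      | pos hs' hiso' he' =>
          rename_i h' x'' Z'' hg
          haveI := hiso; haveI := hiso'
          refine Sh.pos (ih hs') inferInstance ?_
          rw [← Category.assoc, he, Category.assoc, he', ← Category.assoc]
  | neg hs hiso he ih =>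
      cases h2 with
      | neg hs' hiso' he' =>
          rename_i h' y'' Z'' hg
          haveI := hiso; haveI := hiso'
          refine Sh.neg (ih hs') inferInstance ?_
          rw [Category.assoc, he', ← Category.assoc, he, Category.assoc]

/-- A word with a trailing invertible arrow. -/
structure RP (S T : C) : Type (max u v) where
  {mid : C}
  w : W S mid
  u : mid ⟶ T
  hu : IsIso u

/-- The unit-rescaling relation on pairs. -/
inductive RRel {S T : C} : RP S T → RP S T → Prop
  | mk {A B : C} {w : W S A} {w' : W S B} {h : A ⟶ B} {u : A ⟶ T} {u' : B ⟶ T}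
      {hu : IsIso u} {hu' : IsIso u'}
      (hs : Sh w w' h) (he : h ≫ u' = u) : RRel ⟨w, u, hu⟩ ⟨w', u', hu'⟩

theorem RRel.refl' {S T : C} (p : RP S T) : RRel p p := by
  obtain ⟨w, u, hu⟩ := p
  exact RRel.mk (Sh.refl w) (by simp)

theorem RRel.symm' {S T : C} {p q : RP S T} (h : RRel p q) : RRel q p := by
  cases h with
  | mk hs he =>
      haveI := hs.iso
      refine RRel.mk hs.symm' ?_
      rw [← he]; simp

theorem RRel.trans' {S T : C} {p q r : RP S T} (h1 : RRel p q) (h2 : RRel q r) :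
    RRel p r := by
  cases h1 with
  | mk hs he =>
      cases h2 with
      | mk hs' he' =>
          refine RRel.mk (hs.trans' hs') ?_
          rw [Category.assoc, he', he]

/-! ### The multiplication operations -/

/-- Append a positive letter, merging with a trailing positive letter. -/
def appendPosRaw {S A B : C} : W S A → (A ⟶ B) → W S B
  | W.nil _, e => W.pos (W.nil _) e
  | W.pos v x, e => W.pos v (x ≫ e)
  | W.neg v y, e => W.pos (W.neg v y) e

/-- Append a negative letter, merging with a trailing negative letter. -/
def appendNegRaw {S A B : C} : W S A → (B ⟶ A) → W S B
  | W.nil _, β => W.neg (W.nil _) β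
  | W.neg v y, β => W.neg v (β ≫ y)
  | W.pos v x, β => W.neg (W.pos v x) β

/-- Append an arrow which is either a unit (kept as trailing unit) or a positive letter. -/
noncomputable def apS {S A B : C} (w : W S A) (e : A ⟶ B) : RP S B :=
  if h : IsIso e then ⟨w, e, h⟩ else ⟨appendPosRaw w e, 𝟙 B, inferInstance⟩

/-- Multiply a word ending with a negative letter by a positive arrow, given quotients
of a maximal common left divisor decomposition. -/
noncomputable def negStep {S Y' M T : C} (v : W S Y') (q₁ : M ⟶ Y') (q₂ : M ⟶ T) :
    RP S T :=
  if h1 : IsIso q₁ then apS v (inv q₁ ≫ q₂)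
  else if h2 : IsIso q₂ then ⟨W.neg v (inv q₂ ≫ q₁), 𝟙 T, inferInstance⟩
  else ⟨W.pos (W.neg v q₁) q₂, 𝟙 T, inferInstance⟩

/-- Multiply a word ending with a positive letter by a negative arrow, given quotients
of a maximal common right divisor decomposition. -/
noncomputable def posStep {S A M T : C} (v : W S A) (q₁ : A ⟶ M) (q₂ : T ⟶ M) :
    RP S T :=
  if h2 : IsIso q₂ then apS v (q₁ ≫ inv q₂)
  else if h1 : IsIso q₁ then ⟨appendNegRaw v (q₂ ≫ inv q₁), 𝟙 T, inferInstance⟩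
  else ⟨W.neg (W.pos v q₁) q₂, 𝟙 T, inferInstance⟩

/-- Multiply a reduced word on the right by a (non-invertible) arrow `c`. -/
noncomputable def mulPos (hh : Hyp C) {S A T : C} : W S A → (A ⟶ T) → RP S T
  | W.nil _, c => ⟨W.pos (W.nil _) c, 𝟙 T, inferInstance⟩
  | W.pos v x, c => ⟨W.pos v (x ≫ c), 𝟙 T, inferInstance⟩
  | W.neg v y, c => negStep v (mcld hh y c).q₁ (mcld hh y c).q₂

/-- Multiply a reduced word on the right by the inverse of a (non-invertible) arrow `b`. -/
noncomputable def mulNeg (hh : Hyp C) {S A T : C} : W S A → (b : T ⟶ A) → RP S T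
  | W.nil _, b => ⟨W.neg (W.nil _) b, 𝟙 T, inferInstance⟩
  | W.neg v y, b => ⟨W.neg v (b ≫ y), 𝟙 T, inferInstance⟩
  | W.pos v x, b => posStep v (mcrd hh x b).q₁ (mcrd hh x b).q₂

/-- The total right action of an arrow `a` on pairs. -/
noncomputable def tPos (hh : Hyp C) {S T T' : C} (a : T ⟶ T') (p : RP S T) : RP S T' :=
  if h : IsIso (p.u ≫ a) then ⟨p.w, p.u ≫ a, h⟩ else mulPos hh p.w (p.u ≫ a)

/-- The total right action of the inverse of an arrow `a` on pairs. -/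
noncomputable def tNeg (hh : Hyp C) {S T T' : C} (a : T' ⟶ T) (p : RP S T) : RP S T' :=
  letI := p.hu
  if h : IsIso (a ≫ inv p.u) then ⟨p.w, inv (a ≫ inv p.u), inferInstance⟩
  else mulNeg hh p.w (a ≫ inv p.u)

/-! ### Reducedness preservation -/

theorem red_pos_comp (hh : Hyp C) {S Y A B : C} {v : W S Y} {x : Y ⟶ A}
    (hv : Red (W.pos v x)) (e : A ⟶ B) : Red (W.pos v (x ≫ e)) := by
  cases hv with
  | pos_nil ha => exact Red.pos_nil (not_isIso_comp_left hh ha)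
  | pos_neg hw hx hcop =>
      exact Red.pos_neg hw (not_isIso_comp_left hh hx) (LCop_extend hh hcop hx e)

theorem red_neg_comp (hh : Hyp C) {S Y A B : C} {v : W S Y} {y : A ⟶ Y}
    (hv : Red (W.neg v y)) (b : B ⟶ A) : Red (W.neg v (b ≫ y)) := by
  cases hv with
  | neg_nil hb => exact Red.neg_nil (not_isIso_comp_right hh hb)
  | neg_pos hw hy hcop =>
      exact Red.neg_pos hw (not_isIso_comp_right hh hy) (RCop_extend hh hcop hy b)

theorem red_negStep (hh : Hyp C) {S Y' Z T M : C} {v : W S Y'} {y : Z ⟶ Y'}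
    (hv : Red (W.neg v y)) {d : Z ⟶ M} {q₁ : M ⟶ Y'} {q₂ : M ⟶ T}
    (hy : y = d ≫ q₁) (hcop : LCop q₁ q₂) : Red (negStep v q₁ q₂).w := by
  by_cases h1 : IsIso q₁
  · unfold negStep
    rw [dif_pos h1]
    by_cases h3 : IsIso (inv q₁ ≫ q₂)
    · unfold apS
      rw [dif_pos h3]
      cases hv with
      | neg_nil hb => exact Red.nil _
      | neg_pos hw hy hcop => exact hw
    · unfold apS
      rw [dif_neg h3]
      cases hv with
      | neg_nil hb => exact Red.pos_nil h3
      | neg_pos hw hy hcop => exact red_pos_comp hh hw _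
  · by_cases h2 : IsIso q₂
    · unfold negStep
      rw [dif_neg h1, dif_pos h2]
      have hq1 : ¬ IsIso (inv q₂ ≫ q₁) := fun hi => h1 (isIso_right_of_comp hh hi)
      cases hv with
      | neg_nil hb => exact Red.neg_nil hq1
      | neg_pos hw hy' hcop' =>
          refine Red.neg_pos hw hq1 ?_
          refine RCop_right_div hcop' (m := d ≫ q₂) ?_
          have h4 : (d ≫ q₂) ≫ inv q₂ ≫ q₁ = d ≫ q₁ := by simp
          rw [h4]; exact hy
    · unfold negStep
      rw [dif_neg h1, dif_neg h2]
      have hny : Red (W.neg v q₁) := by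
        cases hv with
        | neg_nil hb => exact Red.neg_nil h1
        | neg_pos hw hy' hcop' => exact Red.neg_pos hw h1 (RCop_right_div hcop' hy)
      exact Red.pos_neg hny h2 hcop

theorem red_posStep (hh : Hyp C) {S A Z T M : C} {v : W S A} {x : A ⟶ Z}
    (hv : Red (W.pos v x)) {d : M ⟶ Z} {q₁ : A ⟶ M} {q₂ : T ⟶ M}
    (hx : x = q₁ ≫ d) (hcop : RCop q₁ q₂) : Red (posStep v q₁ q₂).w := by
  by_cases h2 : IsIso q₂
  · unfold posStep
    rw [dif_pos h2]
    by_cases h3 : IsIso (q₁ ≫ inv q₂)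
    · unfold apS
      rw [dif_pos h3]
      cases hv with
      | pos_nil ha => exact Red.nil _
      | pos_neg hw hx hcop => exact hw
    · unfold apS
      rw [dif_neg h3]
      cases hv with
      | pos_nil ha => exact Red.pos_nil h3
      | pos_neg hw hx' hcop' =>
          refine Red.pos_neg hw h3 ?_
          refine LCop_left_div hcop' (c := q₂ ≫ d) ?_
          have h4 : (q₁ ≫ inv q₂) ≫ q₂ ≫ d = q₁ ≫ d := by simp
          rw [h4]; exact hx
  · by_cases h1 : IsIso q₁
    · unfold posStep
      rw [dif_neg h2, dif_pos h1]
      have hβ : ¬ IsIso (q₂ ≫ inv q₁) := fun hi => h2 (isIso_left_of_comp hh hi)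
      cases hv with
      | pos_nil ha => exact Red.neg_nil hβ
      | pos_neg hw hx hcop => exact red_neg_comp hh hw _
    · unfold posStep
      rw [dif_neg h2, dif_neg h1]
      have hpv : Red (W.pos v q₁) := by
        cases hv with
        | pos_nil ha => exact Red.pos_nil h1
        | pos_neg hw hx' hcop' => exact Red.pos_neg hw h1 (LCop_left_div hcop' hx)
      exact Red.neg_pos hpv h2 hcop

theorem red_mulPos (hh : Hyp C) {S A T : C} {w : W S A} (hw : Red w)
    {c : A ⟶ T} (hc : ¬ IsIso c) : Red (mulPos hh w c).w := by
  cases hw with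
  | nil => exact Red.pos_nil hc
  | pos_nil ha => exact Red.pos_nil (not_isIso_comp_left hh ha)
  | neg_nil hb => exact red_negStep hh (Red.neg_nil hb) (mcld hh _ c).h₁ (mcld hh _ c).cop
  | pos_neg hw hx hcop =>
      exact Red.pos_neg hw (not_isIso_comp_left hh hx) (LCop_extend hh hcop hx c)
  | neg_pos hw hy hcop =>
      exact red_negStep hh (Red.neg_pos hw hy hcop) (mcld hh _ c).h₁ (mcld hh _ c).cop

theorem red_mulNeg (hh : Hyp C) {S A T : C} {w : W S A} (hw : Red w)
    {b : T ⟶ A} (hb : ¬ IsIso b) : Red (mulNeg hh w b).w := by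
  cases hw with
  | nil => exact Red.neg_nil hb
  | neg_nil hb' => exact Red.neg_nil (not_isIso_comp_right hh hb')
  | pos_nil ha => exact red_posStep hh (Red.pos_nil ha) (mcrd hh _ b).h₁ (mcrd hh _ b).cop
  | neg_pos hw hy hcop =>
      exact Red.neg_pos hw (not_isIso_comp_right hh hy) (RCop_extend hh hcop hy b)
  | pos_neg hw hx hcop =>
      exact red_posStep hh (Red.pos_neg hw hx hcop) (mcrd hh _ b).h₁ (mcrd hh _ b).cop

/-! ### Congruence lemmas -/

theorem Sh_appendPos {S A A' B B' : C} {v : W S A} {v' : W S A'} {g₀ : A ⟶ A'}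
    (hs : Sh v v' g₀) {e : A ⟶ B} {e' : A' ⟶ B'} {h : B ⟶ B'} (hiso : IsIso h)
    (he : e ≫ h = g₀ ≫ e') :
    Sh (appendPosRaw v e) (appendPosRaw v' e') h := by
  cases hs with
  | nil => exact Sh.pos (Sh.nil _) hiso he
  | pos hs' hiso' he' =>
      refine Sh.pos hs' hiso ?_
      rw [Category.assoc, he, ← Category.assoc, he', Category.assoc]
  | neg hs' hiso' he' => exact Sh.pos (Sh.neg hs' hiso' he') hiso he

theorem Sh_appendNeg {S A A' B B' : C} {v : W S A} {v' : W S A'} {g₀ : A ⟶ A'}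
    (hs : Sh v v' g₀) {β : B ⟶ A} {β' : B' ⟶ A'} {h : B ⟶ B'} (hiso : IsIso h)
    (he : h ≫ β' = β ≫ g₀) :
    Sh (appendNegRaw v β) (appendNegRaw v' β') h := by
  cases hs with
  | nil => exact Sh.neg (Sh.nil _) hiso he
  | neg hs' hiso' he' =>
      refine Sh.neg hs' hiso ?_
      rw [← Category.assoc, he, Category.assoc, he', ← Category.assoc]
  | pos hs' hiso' he' => exact Sh.neg (Sh.pos hs' hiso' he') hiso he

theorem apS_congr {S A A' B : C} {v : W S A} {v' : W S A'} {g₀ : A ⟶ A'}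
    (hs : Sh v v' g₀) {e : A ⟶ B} {e' : A' ⟶ B} (he : e = g₀ ≫ e') :
    RRel (apS v e) (apS v' e') := by
  haveI := hs.iso
  by_cases h : IsIso e'
  · have h2 : IsIso e := by rw [he]; infer_instance
    unfold apS; rw [dif_pos h, dif_pos h2]
    exact RRel.mk hs he.symm
  · have h2 : ¬ IsIso e := by
      intro hi
      apply h
      have h3 : e' = inv g₀ ≫ e := by rw [he]; simp
      rw [h3]
      haveI := hi
      infer_instance
    unfold apS; rw [dif_neg h, dif_neg h2]
    exact RRel.mk (Sh_appendPos hs inferInstance (by rw [Category.comp_id, he]))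
      (Category.id_comp (𝟙 B))

theorem negStep_congr (hh : Hyp C) {S Y1 Y2 M M' T : C} {v : W S Y1} {v' : W S Y2}
    {g₀ : Y1 ⟶ Y2} (hs : Sh v v' g₀)
    {q₁ : M ⟶ Y1} {q₂ : M ⟶ T} {q₁' : M' ⟶ Y2} {q₂' : M' ⟶ T}
    {ρ : M ⟶ M'} (hρ : IsIso ρ)
    (hq1 : q₁ ≫ g₀ = ρ ≫ q₁') (hq2 : q₂ = ρ ≫ q₂') :
    RRel (negStep v q₁ q₂) (negStep v' q₁' q₂') := by
  haveI := hρ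
  haveI := hs.iso
  have hm2 : q₂' = inv ρ ≫ q₂ := by rw [hq2]; simp
  by_cases h1 : IsIso q₁
  · have h1' : IsIso q₁' := by
      have h3 : q₁' = inv ρ ≫ q₁ ≫ g₀ := by rw [hq1]; simp
      rw [h3]; haveI := h1; infer_instance
    unfold negStep
    rw [dif_pos h1, dif_pos h1']
    refine apS_congr hs ?_
    haveI := h1; haveI := h1'
    have e2 : inv q₁ ≫ ρ = g₀ ≫ inv q₁' := by
      apply (cancel_epi q₁).1
      rw [IsIso.hom_inv_id_assoc, ← Category.assoc, hq1, Category.assoc]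
      simp
    rw [hq2, ← Category.assoc, e2, Category.assoc]
  · have h1' : ¬ IsIso q₁' := by
      intro hi
      apply h1
      have h3 : q₁ = ρ ≫ q₁' ≫ inv g₀ := by
        rw [← Category.assoc, ← hq1]; simp
      rw [h3]; haveI := hi; infer_instance
    by_cases h2 : IsIso q₂
    · have h2' : IsIso q₂' := by rw [hm2]; haveI := h2; infer_instance
      unfold negStep
      rw [dif_neg h1, dif_neg h1', dif_pos h2, dif_pos h2']
      refine RRel.mk (Sh.neg hs inferInstance ?_) (Category.id_comp (𝟙 T))
      haveI := h2; haveI := h2'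
      rw [Category.id_comp]
      apply (cancel_epi q₂').1
      rw [IsIso.hom_inv_id_assoc, hm2]
      simp only [Category.assoc, IsIso.hom_inv_id_assoc]
      rw [hq1]
      simp
    · have h2' : ¬ IsIso q₂' := by
        intro hi
        apply h2
        rw [hq2]; haveI := hi; infer_instance
      unfold negStep
      rw [dif_neg h1, dif_neg h1', dif_neg h2, dif_neg h2']
      refine RRel.mk (Sh.pos (Sh.neg hs hρ hq1.symm) inferInstance ?_)
        (Category.id_comp (𝟙 T))
      rw [Category.comp_id]; exact hq2

theorem posStep_congr (hh : Hyp C) {S A A' M M' T : C} {v : W S A} {v' : W S A'}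
    {g₀ : A ⟶ A'} (hs : Sh v v' g₀)
    {q₁ : A ⟶ M} {q₂ : T ⟶ M} {q₁' : A' ⟶ M'} {q₂' : T ⟶ M'}
    {ρ : M' ⟶ M} (hρ : IsIso ρ)
    (hq1 : q₁ = g₀ ≫ q₁' ≫ ρ) (hq2 : q₂ = q₂' ≫ ρ) :
    RRel (posStep v q₁ q₂) (posStep v' q₁' q₂') := by
  haveI := hρ
  haveI := hs.iso
  by_cases h2 : IsIso q₂
  · have h2' : IsIso q₂' := by
      have h3 : q₂' = q₂ ≫ inv ρ := by rw [hq2]; simp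
      rw [h3]; haveI := h2; infer_instance
    unfold posStep
    rw [dif_pos h2, dif_pos h2']
    refine apS_congr hs ?_
    haveI := h2; haveI := h2'
    have hinv : inv q₂ = inv ρ ≫ inv q₂' :=
      IsIso.inv_eq_of_hom_inv_id (by rw [hq2]; simp)
    rw [hq1, hinv]
    simp
  · have h2' : ¬ IsIso q₂' := by
      intro hi
      apply h2
      rw [hq2]; haveI := hi; infer_instance
    by_cases h1 : IsIso q₁
    · have h1' : IsIso q₁' := by
        have h3 : q₁' = inv g₀ ≫ q₁ ≫ inv ρ := by rw [hq1]; simp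
        rw [h3]; haveI := h1; infer_instance
      unfold posStep
      rw [dif_neg h2, dif_neg h2', dif_pos h1, dif_pos h1']
      refine RRel.mk (Sh_appendNeg hs inferInstance ?_) (Category.id_comp (𝟙 T))
      haveI := h1; haveI := h1'
      have hinv1 : inv q₁ = inv ρ ≫ inv q₁' ≫ inv g₀ :=
        IsIso.inv_eq_of_hom_inv_id (by rw [hq1]; simp)
      rw [Category.id_comp, hq2, hinv1]
      simp
    · have h1' : ¬ IsIso q₁' := by
        intro hi
        apply h1
        rw [hq1]; haveI := hi; infer_instance
      unfold posStep
      rw [dif_neg h2, dif_neg h2', dif_neg h1, dif_neg h1']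
      refine RRel.mk (Sh.neg (Sh.pos hs (inferInstance : IsIso (inv ρ)) ?_)
        inferInstance ?_) (Category.id_comp (𝟙 T))
      · rw [hq1]; simp
      · rw [Category.id_comp, hq2]; simp

theorem mulPos_congr (hh : Hyp C) {S A B T : C} {w : W S A} {w' : W S B} {h : A ⟶ B}
    (hs : Sh w w' h) {c : A ⟶ T} {c' : B ⟶ T} (he : c = h ≫ c') :
    RRel (mulPos hh w c) (mulPos hh w' c') := by
  cases hs with
  | nil =>
      refine RRel.mk (Sh.pos (Sh.nil _) inferInstance ?_) (Category.id_comp (𝟙 T))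
      rw [Category.comp_id, he]
  | pos hs' hiso' he' =>
      refine RRel.mk (Sh.pos hs' inferInstance ?_) (Category.id_comp (𝟙 T))
      rw [Category.comp_id, he, ← Category.assoc, he', Category.assoc]
  | @neg _ _ _ _ v v' g₀ hs' y y' hW hiso' he' =>
      haveI := hiso'
      set m := mcld hh y c with hm
      have hy' : y' = (inv h ≫ m.d) ≫ m.q₁ ≫ g₀ := by
        have h2 : y' = inv h ≫ (y ≫ g₀) := by rw [← he']; simp
        have key : (inv h ≫ m.d) ≫ m.q₁ ≫ g₀ = inv h ≫ (m.d ≫ m.q₁) ≫ g₀ := by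
          simp only [Category.assoc]
        rw [key, ← m.h₁]
        exact h2
      have hc' : c' = (inv h ≫ m.d) ≫ m.q₂ := by
        have h2 : c' = inv h ≫ c := by rw [he]; simp
        have key : (inv h ≫ m.d) ≫ m.q₂ = inv h ≫ (m.d ≫ m.q₂) :=
          Category.assoc _ _ _
        rw [key, ← m.h₂]
        exact h2
      have hcop : LCop (m.q₁ ≫ g₀) m.q₂ :=
        LCop_symm (LCop_unit_right (LCop_symm m.cop) hs'.iso rfl)
      obtain ⟨ρ, hρ, hd, hf1, hf2⟩ :=
        mcld_unique hh (mcld hh y' c') _ _ _ hy' hc' hcop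
      exact negStep_congr hh hs' hρ hf1 hf2

theorem mulNeg_congr (hh : Hyp C) {S A B T : C} {w : W S A} {w' : W S B} {h : A ⟶ B}
    (hs : Sh w w' h) {b : T ⟶ A} {b' : T ⟶ B} (hb : b' = b ≫ h) :
    RRel (mulNeg hh w b) (mulNeg hh w' b') := by
  cases hs with
  | nil =>
      refine RRel.mk (Sh.neg (Sh.nil _) inferInstance ?_) (Category.id_comp (𝟙 T))
      rw [Category.id_comp, hb]
  | neg hs' hiso' he' =>
      refine RRel.mk (Sh.neg hs' inferInstance ?_) (Category.id_comp (𝟙 T))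
      rw [Category.id_comp, hb, Category.assoc, he', ← Category.assoc]
  | @pos _ _ _ _ v v' g₀ hs' x x' hW hiso' he' =>
      haveI := hiso'
      haveI := hs'.iso
      set m := mcrd hh x b with hm
      have hx' : x' = (inv g₀ ≫ m.q₁) ≫ m.d ≫ h := by
        have h2 : x' = inv g₀ ≫ (x ≫ h) := by rw [he']; simp
        have key : (inv g₀ ≫ m.q₁) ≫ m.d ≫ h = inv g₀ ≫ (m.q₁ ≫ m.d) ≫ h := by
          simp only [Category.assoc]
        rw [key, ← m.h₁]
        exact h2
      have hb' : b' = m.q₂ ≫ m.d ≫ h := by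
        have key : m.q₂ ≫ m.d ≫ h = (m.q₂ ≫ m.d) ≫ h := (Category.assoc _ _ _).symm
        rw [key, ← m.h₂]
        exact hb
      have hcop : RCop (inv g₀ ≫ m.q₁) m.q₂ :=
        RCop_symm (RCop_unit_left (RCop_symm m.cop) (inferInstance : IsIso (inv g₀)) rfl)
      obtain ⟨ρ, hρ, hd, hf1, hf2⟩ :=
        mcrd_unique hh (mcrd hh x' b') _ _ _ hx' hb' hcop
      have hq1 : m.q₁ = g₀ ≫ (mcrd hh x' b').q₁ ≫ ρ := by
        rw [← hf1]; simp
      exact posStep_congr hh hs' hρ hq1 hf2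

theorem tPos_unfold (hh : Hyp C) {S A T T' : C} (a : T ⟶ T') (w : W S A)
    (u : A ⟶ T) (hu : IsIso u) :
    tPos hh a ⟨w, u, hu⟩ =
      if h : IsIso (u ≫ a) then ⟨w, u ≫ a, h⟩ else mulPos hh w (u ≫ a) := rfl

theorem tNeg_unfold (hh : Hyp C) {S A T T' : C} (a : T' ⟶ T) (w : W S A)
    (u : A ⟶ T) (hu : IsIso u) :
    tNeg hh a ⟨w, u, hu⟩ =
      (letI := hu
      if h : IsIso (a ≫ inv u) then ⟨w, inv (a ≫ inv u), inferInstance⟩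
      else mulNeg hh w (a ≫ inv u)) := rfl

theorem tPos_congr (hh : Hyp C) {S T T' : C} (a : T ⟶ T') {p q : RP S T}
    (hpq : RRel p q) : RRel (tPos hh a p) (tPos hh a q) := by
  cases hpq with
  | @mk _ _ w w' hW u u' hu hu' hs he =>
      haveI := hs.iso
      have hcomp : u ≫ a = hW ≫ (u' ≫ a) := by rw [← Category.assoc, he]
      rw [tPos_unfold, tPos_unfold]
      by_cases h : IsIso (u' ≫ a)
      · have h2 : IsIso (u ≫ a) := by rw [hcomp]; infer_instance
        rw [dif_pos h, dif_pos h2]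
        exact RRel.mk hs hcomp.symm
      · have h2 : ¬ IsIso (u ≫ a) := by
          intro hi
          apply h
          have h3 : u' ≫ a = inv hW ≫ (u ≫ a) := by rw [hcomp]; simp
          rw [h3]; haveI := hi; infer_instance
        rw [dif_neg h, dif_neg h2]
        exact mulPos_congr hh hs hcomp

theorem tNeg_congr (hh : Hyp C) {S T T' : C} (a : T' ⟶ T) {p q : RP S T}
    (hpq : RRel p q) : RRel (tNeg hh a p) (tNeg hh a q) := by
  cases hpq with
  | @mk _ _ w w' hW u u' hu hu' hs he =>
      haveI := hs.iso
      haveI := hu; haveI := hu'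
      have hinv : inv u = inv u' ≫ inv hW :=
        IsIso.inv_eq_of_hom_inv_id (by rw [← he]; simp)
      have hcomp : a ≫ inv u' = (a ≫ inv u) ≫ hW := by
        rw [hinv]; simp
      rw [tNeg_unfold, tNeg_unfold]
      by_cases h : IsIso (a ≫ inv u')
      · have h2 : IsIso (a ≫ inv u) := by
          have h3 : a ≫ inv u = (a ≫ inv u') ≫ inv hW := by rw [hcomp]; simp
          rw [h3]; haveI := h; infer_instance
        rw [dif_pos h, dif_pos h2]
        refine RRel.mk hs ?_
        have h4 : inv (a ≫ inv u') = inv hW ≫ inv (a ≫ inv u) := by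
          haveI := h2
          refine IsIso.inv_eq_of_hom_inv_id ?_
          rw [hcomp]
          simp only [Category.assoc, IsIso.hom_inv_id_assoc]
          rw [← Category.assoc]
          exact IsIso.hom_inv_id _
        rw [h4]
        simp
      · have h2 : ¬ IsIso (a ≫ inv u) := by
          intro hi
          apply h
          rw [hcomp]; haveI := hi; infer_instance
        rw [dif_neg h, dif_neg h2]
        exact mulNeg_congr hh hs hcomp

/-! ### Helper lemmas for the composition laws -/

theorem LCop_of_iso_left (hh : Hyp C) {Z A B : C} {p : Z ⟶ A} {q : Z ⟶ B}
    (hp : IsIso p) : LCop p q := by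
  intro M d f g h1 h2
  refine isIso_of_right_inv hh (b := f ≫ inv p) ?_
  rw [← Category.assoc, ← h1]
  simp

theorem LCop_of_iso_right (hh : Hyp C) {Z A B : C} {p : Z ⟶ A} {q : Z ⟶ B}
    (hq : IsIso q) : LCop p q := by
  intro M d f g h1 h2
  refine isIso_of_right_inv hh (b := g ≫ inv q) ?_
  rw [← Category.assoc, ← h2]
  simp

theorem RCop_of_iso_left (hh : Hyp C) {Z A B : C} {p : A ⟶ Z} {q : B ⟶ Z}
    (hp : IsIso p) : RCop p q := by
  intro M d f g h1 h2
  refine isIso_of_left_inv hh (b := inv p ≫ f) ?_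
  rw [Category.assoc, ← h1]
  simp

theorem RCop_of_iso_right (hh : Hyp C) {Z A B : C} {p : A ⟶ Z} {q : B ⟶ Z}
    (hq : IsIso q) : RCop p q := by
  intro M d f g h1 h2
  refine isIso_of_left_inv hh (b := inv q ≫ g) ?_
  rw [Category.assoc, ← h2]
  simp

/-- Not ending with a negative letter. -/
def NNE {S A : C} : W S A → Prop := fun w =>
  match w with
  | W.neg _ _ => False
  | _ => True

/-- Not ending with a positive letter. -/
def NPE {S A : C} : W S A → Prop := fun w =>
  match w with
  | W.pos _ _ => False
  | _ => True

theorem nne_nil (X : C) : NNE (W.nil X) := trivial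

theorem nne_pos {S A B : C} (v : W S A) (x : A ⟶ B) : NNE (W.pos v x) := trivial

theorem npe_nil (X : C) : NPE (W.nil X) := trivial

theorem npe_neg {S A B : C} (v : W S A) (y : B ⟶ A) : NPE (W.neg v y) := trivial

theorem NNE_appendPos {S A B : C} (v : W S A) (e : A ⟶ B) :
    NNE (appendPosRaw v e) := by
  cases v <;> trivial

theorem NPE_appendNeg {S A B : C} (v : W S A) (β : B ⟶ A) :
    NPE (appendNegRaw v β) := by
  cases v <;> trivial

theorem nne_of_red_neg {S Y' Z : C} {v : W S Y'} {y : Z ⟶ Y'}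
    (hv : Red (W.neg v y)) : NNE v := by
  cases hv with
  | neg_nil _ => trivial
  | neg_pos _ _ _ => trivial

theorem npe_of_red_pos {S Y' Z : C} {v : W S Y'} {x : Y' ⟶ Z}
    (hv : Red (W.pos v x)) : NPE v := by
  cases hv with
  | pos_nil _ => trivial
  | pos_neg _ _ _ => trivial

theorem appendPosRaw_comp {S A B D : C} (v : W S A) (e : A ⟶ B) (f : B ⟶ D) :
    appendPosRaw (appendPosRaw v e) f = appendPosRaw v (e ≫ f) := by
  cases v with
  | nil => rfl
  | pos v₂ x => simp only [appendPosRaw, Category.assoc]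
  | neg v₂ y => rfl

theorem appendNegRaw_comp {S A B D : C} (v : W S A) (β : B ⟶ A) (γ : D ⟶ B) :
    appendNegRaw (appendNegRaw v β) γ = appendNegRaw v (γ ≫ β) := by
  cases v with
  | nil => rfl
  | pos v₂ x => rfl
  | neg v₂ y => simp only [appendNegRaw, Category.assoc]

theorem mulPos_nne (hh : Hyp C) {S A B : C} {v : W S A} (hv : NNE v) (e : A ⟶ B) :
    mulPos hh v e = ⟨appendPosRaw v e, 𝟙 B, inferInstance⟩ := by
  cases v with
  | nil => rfl
  | pos v₂ x => rfl
  | neg v₂ y => exact hv.elim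

theorem mulPos_eq_apS (hh : Hyp C) {S A B : C} {v : W S A} (hv : NNE v)
    {e : A ⟶ B} (he : ¬ IsIso e) : mulPos hh v e = apS v e := by
  rw [mulPos_nne hh hv, apS, dif_neg he]

theorem mulNeg_npe (hh : Hyp C) {S A B : C} {v : W S A} (hv : NPE v) (β : B ⟶ A) :
    mulNeg hh v β = ⟨appendNegRaw v β, 𝟙 B, inferInstance⟩ := by
  cases v with
  | nil => rfl
  | neg v₂ y => rfl
  | pos v₂ x => exact hv.elim

theorem negStep_spec (hh : Hyp C) {S Y' Z T M : C} (v : W S Y') {y : Z ⟶ Y'}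
    {c : Z ⟶ T} {D : Z ⟶ M} {f₁ : M ⟶ Y'} {f₂ : M ⟶ T}
    (h₁ : y = D ≫ f₁) (h₂ : c = D ≫ f₂) (hcop : LCop f₁ f₂) :
    RRel (negStep v (mcld hh y c).q₁ (mcld hh y c).q₂) (negStep v f₁ f₂) := by
  obtain ⟨ρ, hρ, hd, hf1, hf2⟩ := mcld_unique hh (mcld hh y c) D f₁ f₂ h₁ h₂ hcop
  haveI := hρ
  refine negStep_congr hh (Sh.refl v) (ρ := inv ρ) inferInstance ?_ ?_
  · rw [Category.comp_id, hf1]; simp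
  · rw [hf2]; simp

theorem posStep_spec (hh : Hyp C) {S A Z T M : C} (v : W S A) {x : A ⟶ Z}
    {b : T ⟶ Z} {D : M ⟶ Z} {f₁ : A ⟶ M} {f₂ : T ⟶ M}
    (h₁ : x = f₁ ≫ D) (h₂ : b = f₂ ≫ D) (hcop : RCop f₁ f₂) :
    RRel (posStep v (mcrd hh x b).q₁ (mcrd hh x b).q₂) (posStep v f₁ f₂) := by
  obtain ⟨ρ, hρ, hd, hf1, hf2⟩ := mcrd_unique hh (mcrd hh x b) D f₁ f₂ h₁ h₂ hcop
  haveI := hρ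
  refine posStep_congr hh (Sh.refl v) (ρ := inv ρ) inferInstance ?_ ?_
  · rw [Category.id_comp, hf1]; simp
  · rw [hf2]; simp

/-! ### Composition laws -/

theorem tPos_apS_nne (hh : Hyp C) {S A B D : C} {v : W S A} (hnne : NNE v)
    (e : A ⟶ B) (b : B ⟶ D) :
    RRel (tPos hh b (apS v e)) (apS v (e ≫ b)) := by
  by_cases h3 : IsIso e
  · unfold apS
    rw [dif_pos h3, tPos_unfold]
    by_cases h4 : IsIso (e ≫ b)
    · rw [dif_pos h4, dif_pos h4]
      exact RRel.refl' _
    · rw [dif_neg h4, dif_neg h4, mulPos_nne hh hnne]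
      exact RRel.refl' _
  · have h4 : ¬ IsIso (e ≫ b) := not_isIso_comp_left hh h3
    unfold apS
    rw [dif_neg h3, dif_neg h4, tPos_unfold]
    by_cases hb : IsIso b
    · rw [dif_pos (show IsIso (𝟙 B ≫ b) by simpa using hb)]
      refine RRel.mk (Sh_appendPos (Sh.refl v) (h := 𝟙 B ≫ b)
        (by simpa using hb) (by simp)) (by simp)
    · rw [dif_neg (show ¬ IsIso (𝟙 B ≫ b) by simpa using hb),
        mulPos_nne hh (NNE_appendPos v e), appendPosRaw_comp]
      have h5 : e ≫ 𝟙 B ≫ b = e ≫ b := by simp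
      rw [h5]
      exact RRel.refl' _

theorem mulPos_tPos (hh : Hyp C) {S A T2 T3 : C} {w : W S A} (hw : Red w)
    {c : A ⟶ T2} (hc : ¬ IsIso c) (b : T2 ⟶ T3) :
    RRel (tPos hh b (mulPos hh w c)) (mulPos hh w (c ≫ b)) := by
  have hcb : ¬ IsIso (c ≫ b) := not_isIso_comp_left hh hc
  cases w with
  | nil =>
      rw [mulPos_eq_apS hh (nne_nil S) hc,
        mulPos_eq_apS hh (nne_nil S) hcb]
      exact tPos_apS_nne hh (nne_nil S) c b
  | pos v x =>
      rw [mulPos_eq_apS hh (nne_pos v x) hc,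
        mulPos_eq_apS hh (nne_pos v x) hcb]
      exact tPos_apS_nne hh (nne_pos v x) c b
  | neg v y =>
      have hnne : NNE v := nne_of_red_neg hw
      have hyn : ¬ IsIso y := by
        cases hw with
        | neg_nil h => exact h
        | neg_pos _ h _ => exact h
      set m := mcld hh y c with hm
      show RRel (tPos hh b (negStep v m.q₁ m.q₂))
        (negStep v (mcld hh y (c ≫ b)).q₁ (mcld hh y (c ≫ b)).q₂)
      by_cases h1 : IsIso m.q₁
      · -- q₁ invertible
        have spec1 : RRel (negStep v (mcld hh y (c ≫ b)).q₁ (mcld hh y (c ≫ b)).q₂)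
            (negStep v m.q₁ (m.q₂ ≫ b)) := by
          refine negStep_spec hh v m.h₁ ?_ (LCop_of_iso_left hh h1)
          rw [← Category.assoc, ← m.h₂]
        refine RRel.trans' ?_ spec1.symm'
        rw [show negStep v m.q₁ m.q₂ = apS v (inv m.q₁ ≫ m.q₂) from by
          unfold negStep; rw [dif_pos h1]]
        rw [show negStep v m.q₁ (m.q₂ ≫ b) = apS v (inv m.q₁ ≫ m.q₂ ≫ b) from by
          unfold negStep; rw [dif_pos h1]]
        have hassoc : inv m.q₁ ≫ m.q₂ ≫ b = (inv m.q₁ ≫ m.q₂) ≫ b := by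
          simp only [Category.assoc]
        rw [hassoc]
        exact tPos_apS_nne hh hnne _ b
      · by_cases h2 : IsIso m.q₂
        · -- q₂ invertible, q₁ not
          have hy'n : ¬ IsIso (inv m.q₂ ≫ m.q₁) := fun hi =>
            h1 (by
              rw [show m.q₁ = m.q₂ ≫ (inv m.q₂ ≫ m.q₁) from by simp]
              haveI := hi; infer_instance)
          set n := mcld hh (inv m.q₂ ≫ m.q₁) b with hn
          have spec2 : RRel (negStep v (mcld hh y (c ≫ b)).q₁ (mcld hh y (c ≫ b)).q₂)
              (negStep v n.q₁ n.q₂) := by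
            refine negStep_spec hh v (D := (m.d ≫ m.q₂) ≫ n.d) ?_ ?_ n.cop
            · simp only [Category.assoc]
              rw [← n.h₁]
              have h5 : m.d ≫ m.q₂ ≫ inv m.q₂ ≫ m.q₁ = m.d ≫ m.q₁ := by simp
              rw [h5, ← m.h₁]
            · simp only [Category.assoc]
              rw [← n.h₂, ← Category.assoc, ← m.h₂]
          refine RRel.trans' ?_ spec2.symm'
          rw [show negStep v m.q₁ m.q₂
              = ⟨W.neg v (inv m.q₂ ≫ m.q₁), 𝟙 T2, inferInstance⟩ from by
            unfold negStep; rw [dif_neg h1, dif_pos h2]]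
          rw [tPos_unfold]
          by_cases hb : IsIso b
          · rw [dif_pos (show IsIso (𝟙 T2 ≫ b) by simpa using hb)]
            have hnd : IsIso n.d :=
              LCop_of_iso_right hh hb n.d n.q₁ n.q₂ n.h₁ n.h₂
            have hnq1 : ¬ IsIso n.q₁ := fun hi => hy'n (by
              rw [n.h₁]; haveI := hi; infer_instance)
            have hnq2 : IsIso n.q₂ := by
              have h5 : IsIso (n.d ≫ n.q₂) := by rw [← n.h₂]; exact hb
              exact isIso_right_of_comp hh h5
            rw [show negStep v n.q₁ n.q₂
                = ⟨W.neg v (inv n.q₂ ≫ n.q₁), 𝟙 T3, inferInstance⟩ from by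
              unfold negStep; rw [dif_neg hnq1, dif_pos hnq2]]
            refine RRel.mk (Sh.neg (Sh.refl v) (by simpa using hb) ?_) (by simp)
            haveI := hnq2
            have h6 : b ≫ inv n.q₂ = n.d := by
              have h7 : (n.d ≫ n.q₂) ≫ inv n.q₂ = n.d := by simp
              rw [← h7, ← n.h₂]
            simp only [Category.id_comp, Category.comp_id]
            rw [← Category.assoc, h6]
            exact n.h₁.symm
          · rw [dif_neg (show ¬ IsIso (𝟙 T2 ≫ b) by simpa using hb),
              Category.id_comp]
            exact RRel.refl' _
        · -- both non-invertible
          have hq2b : ¬ IsIso (m.q₂ ≫ b) := not_isIso_comp_left hh h2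
          have spec3 : RRel (negStep v (mcld hh y (c ≫ b)).q₁ (mcld hh y (c ≫ b)).q₂)
              (negStep v m.q₁ (m.q₂ ≫ b)) := by
            refine negStep_spec hh v m.h₁ ?_ (LCop_extend hh m.cop h2 b)
            rw [← Category.assoc, ← m.h₂]
          refine RRel.trans' ?_ spec3.symm'
          rw [show negStep v m.q₁ m.q₂
              = ⟨W.pos (W.neg v m.q₁) m.q₂, 𝟙 T2, inferInstance⟩ from by
            unfold negStep; rw [dif_neg h1, dif_neg h2]]
          rw [show negStep v m.q₁ (m.q₂ ≫ b)
              = ⟨W.pos (W.neg v m.q₁) (m.q₂ ≫ b), 𝟙 T3, inferInstance⟩ from by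
            unfold negStep; rw [dif_neg h1, dif_neg hq2b]]
          rw [tPos_unfold]
          by_cases hb : IsIso b
          · rw [dif_pos (show IsIso (𝟙 T2 ≫ b) by simpa using hb)]
            exact RRel.mk (Sh.pos (Sh.refl (W.neg v m.q₁)) (by simpa using hb)
              (by simp)) (by simp)
          · rw [dif_neg (show ¬ IsIso (𝟙 T2 ≫ b) by simpa using hb),
              Category.id_comp]
            exact RRel.refl' _

theorem tPos_comp (hh : Hyp C) {S T1 T2 T3 : C} (a : T1 ⟶ T2) (b : T2 ⟶ T3)
    (p : RP S T1) (hp : Red p.w) :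
    RRel (tPos hh b (tPos hh a p)) (tPos hh (a ≫ b) p) := by
  obtain ⟨w, u, hu⟩ := p
  have hp' : Red w := hp
  rw [tPos_unfold hh a w u hu, tPos_unfold hh (a ≫ b) w u hu]
  have hassoc : u ≫ a ≫ b = (u ≫ a) ≫ b := by simp only [Category.assoc]
  by_cases hc : IsIso (u ≫ a)
  · rw [dif_pos hc, tPos_unfold]
    by_cases hcb : IsIso ((u ≫ a) ≫ b)
    · rw [dif_pos hcb, dif_pos (show IsIso (u ≫ a ≫ b) by rw [hassoc]; exact hcb)]
      exact RRel.mk (Sh.refl w) (by simp)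
    · rw [dif_neg hcb, dif_neg (show ¬ IsIso (u ≫ a ≫ b) by rw [hassoc]; exact hcb),
        hassoc]
      exact RRel.refl' _
  · have hcb : ¬ IsIso (u ≫ a ≫ b) := by
      rw [hassoc]; exact not_isIso_comp_left hh hc
    rw [dif_neg hc, dif_neg hcb, hassoc]
    exact mulPos_tPos hh hp' hc b

/-! ### Inverse law: tPos after tNeg -/

theorem appendPosRaw_npe {S A B : C} {v : W S A} (hv : NPE v) (z : A ⟶ B) :
    appendPosRaw v z = W.pos v z := by
  cases v with
  | nil => rfl
  | neg v₂ y₂ => rfl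
  | pos v₂ x₂ => exact hv.elim

theorem appendNegRaw_nne {S A B : C} {v : W S A} (hv : NNE v) (z : B ⟶ A) :
    appendNegRaw v z = W.neg v z := by
  cases v with
  | nil => rfl
  | pos v₂ x₂ => rfl
  | neg v₂ y₂ => exact hv.elim

theorem pos_letter_shift {S A T : C} (v : W S A) {B : C} (x : A ⟶ B) {u : B ⟶ T}
    (hu : IsIso u) :
    RRel (⟨W.pos v (x ≫ u), 𝟙 T, inferInstance⟩ : RP S T) ⟨W.pos v x, u, hu⟩ := by
  haveI := hu
  exact RRel.mk (Sh.pos (Sh.refl v) (inferInstance : IsIso (inv u)) (by simp))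
    (by simp)

theorem red_pos_letter {S Y A : C} {v : W S Y} {x : Y ⟶ A}
    (hw : Red (W.pos v x)) : ¬ IsIso x := by
  cases hw with
  | pos_nil h => exact h
  | pos_neg _ h _ => exact h

theorem red_neg_letter {S Y A : C} {v : W S Y} {y : A ⟶ Y}
    (hw : Red (W.neg v y)) : ¬ IsIso y := by
  cases hw with
  | neg_nil h => exact h
  | neg_pos _ h _ => exact h

theorem mulPos_letter (hh : Hyp C) {S A B T : C} {v : W S A} {x : A ⟶ B}
    (hw : Red (W.pos v x)) {u : B ⟶ T} (hu : IsIso u) :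
    RRel (mulPos hh v (x ≫ u)) ⟨W.pos v x, u, hu⟩ := by
  haveI := hu
  have hxn : ¬ IsIso x := red_pos_letter hw
  have hxu : ¬ IsIso (x ≫ u) := not_isIso_comp_left hh hxn
  cases v with
  | nil =>
      rw [mulPos_eq_apS hh (nne_nil _) hxu, apS, dif_neg hxu]
      exact pos_letter_shift _ x hu
  | pos v₂ x₂ => cases hw
  | neg v₂ y₂ =>
      have hcop : LCop y₂ x := by cases hw with | pos_neg _ _ h => exact h
      have hy₂ : ¬ IsIso y₂ := by
        cases hw with | pos_neg h _ _ => exact red_neg_letter h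
      show RRel (negStep v₂ (mcld hh y₂ (x ≫ u)).q₁ (mcld hh y₂ (x ≫ u)).q₂) _
      refine RRel.trans' (negStep_spec hh v₂ (D := 𝟙 _) (f₁ := y₂) (f₂ := x ≫ u)
        (by simp) (by simp) (LCop_unit_right hcop hu rfl)) ?_
      rw [show negStep v₂ y₂ (x ≫ u)
          = ⟨W.pos (W.neg v₂ y₂) (x ≫ u), 𝟙 _, inferInstance⟩ from by
        unfold negStep; rw [dif_neg hy₂, dif_neg hxu]]
      exact pos_letter_shift _ x hu

theorem mulNeg_tPos (hh : Hyp C) {S A T' T : C} {w : W S A} (hw : Red w)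
    {b : T' ⟶ A} (hb : ¬ IsIso b) (u : A ⟶ T) (hu : IsIso u) :
    RRel (tPos hh (b ≫ u) (mulNeg hh w b)) ⟨w, u, hu⟩ := by
  haveI := hu
  have hbu : ¬ IsIso (b ≫ u) := fun hi => hb (by
    have h0 : b = (b ≫ u) ≫ inv u := by simp
    rw [h0]; haveI := hi; infer_instance)
  cases w with
  | nil =>
      rw [show mulNeg hh (W.nil S) b = ⟨W.neg (W.nil S) b, 𝟙 T', inferInstance⟩
          from rfl, tPos_unfold,
        dif_neg (show ¬ IsIso (𝟙 T' ≫ b ≫ u) by simpa using hbu), Category.id_comp]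
      show RRel (negStep (W.nil S) (mcld hh b (b ≫ u)).q₁ (mcld hh b (b ≫ u)).q₂) _
      refine RRel.trans' (negStep_spec hh (W.nil S) (D := b) (f₁ := 𝟙 S) (f₂ := u)
        (by simp) rfl (LCop_of_iso_left hh inferInstance)) ?_
      rw [show negStep (W.nil S) (𝟙 S) u = apS (W.nil S) (inv (𝟙 S) ≫ u) from by
        unfold negStep; rw [dif_pos (inferInstance : IsIso (𝟙 S))]]
      have h5 : inv (𝟙 S) ≫ u = u := by simp
      rw [h5, apS, dif_pos hu]
      exact RRel.refl' _
  | neg v y =>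
      have hyn : ¬ IsIso y := red_neg_letter hw
      rw [show mulNeg hh (W.neg v y) b = ⟨W.neg v (b ≫ y), 𝟙 T', inferInstance⟩
          from rfl, tPos_unfold,
        dif_neg (show ¬ IsIso (𝟙 T' ≫ b ≫ u) by simpa using hbu), Category.id_comp]
      show RRel (negStep v (mcld hh (b ≫ y) (b ≫ u)).q₁ (mcld hh (b ≫ y) (b ≫ u)).q₂) _
      refine RRel.trans' (negStep_spec hh v (D := b) (f₁ := y) (f₂ := u) rfl rfl
        (LCop_of_iso_right hh hu)) ?_
      rw [show negStep v y u = ⟨W.neg v (inv u ≫ y), 𝟙 T, inferInstance⟩ from by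
        unfold negStep; rw [dif_neg hyn, dif_pos hu]]
      refine RRel.mk (Sh.neg (Sh.refl v) (inferInstance : IsIso (inv u)) (by simp))
        (by simp)
  | pos v x =>
      have hxn : ¬ IsIso x := red_pos_letter hw
      have hxu : ¬ IsIso (x ≫ u) := not_isIso_comp_left hh hxn
      set n := mcrd hh x b with hn
      rw [show mulNeg hh (W.pos v x) b = posStep v n.q₁ n.q₂ from rfl]
      by_cases h2 : IsIso n.q₂
      · haveI := h2
        have harr : (n.q₁ ≫ inv n.q₂) ≫ (b ≫ u) = x ≫ u := by
          have h0 : (n.q₁ ≫ inv n.q₂) ≫ ((n.q₂ ≫ n.d) ≫ u) = x ≫ u := by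
            simp only [Category.assoc, IsIso.inv_hom_id_assoc]
            rw [← Category.assoc, ← n.h₁]
          rwa [← n.h₂] at h0
        rw [show posStep v n.q₁ n.q₂ = apS v (n.q₁ ≫ inv n.q₂) from by
          unfold posStep; rw [dif_pos h2]]
        by_cases h3 : IsIso (n.q₁ ≫ inv n.q₂)
        · rw [apS, dif_pos h3, tPos_unfold,
            dif_neg (show ¬ IsIso ((n.q₁ ≫ inv n.q₂) ≫ (b ≫ u)) from by
              rw [harr]; exact hxu), harr]
          exact mulPos_letter hh hw hu
        · rw [apS, dif_neg h3, tPos_unfold,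
            dif_neg (show ¬ IsIso (𝟙 T' ≫ b ≫ u) by simpa using hbu),
            Category.id_comp,
            mulPos_nne hh (NNE_appendPos v (n.q₁ ≫ inv n.q₂)) (b ≫ u),
            appendPosRaw_comp, harr, appendPosRaw_npe (npe_of_red_pos hw)]
          exact pos_letter_shift v x hu
      · by_cases h1 : IsIso n.q₁
        · haveI := h1
          have hβ : ¬ IsIso (n.q₂ ≫ inv n.q₁) := fun hi =>
            h2 (isIso_left_of_comp hh hi)
          have hβx : (n.q₂ ≫ inv n.q₁) ≫ x = b := by
            have h0 : (n.q₂ ≫ inv n.q₁) ≫ (n.q₁ ≫ n.d) = n.q₂ ≫ n.d := by simp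
            rwa [← n.h₁, ← n.h₂] at h0
          have hbu' : b ≫ u = (n.q₂ ≫ inv n.q₁) ≫ (x ≫ u) := by
            have h0 := congrArg (fun z => z ≫ u) hβx
            rw [← h0]
            simp only [Category.assoc]
          rw [show posStep v n.q₁ n.q₂
              = ⟨appendNegRaw v (n.q₂ ≫ inv n.q₁), 𝟙 T', inferInstance⟩ from by
            unfold posStep; rw [dif_neg h2, dif_pos h1]]
          rw [tPos_unfold,
            dif_neg (show ¬ IsIso (𝟙 T' ≫ b ≫ u) by simpa using hbu),
            Category.id_comp]
          cases v with
          | nil =>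
              rw [appendNegRaw_nne (nne_nil S)]
              show RRel (negStep (W.nil S)
                (mcld hh (n.q₂ ≫ inv n.q₁) (b ≫ u)).q₁
                (mcld hh (n.q₂ ≫ inv n.q₁) (b ≫ u)).q₂) _
              refine RRel.trans' (negStep_spec hh (W.nil S)
                (D := n.q₂ ≫ inv n.q₁) (f₁ := 𝟙 S) (f₂ := x ≫ u)
                (by simp) hbu' (LCop_of_iso_left hh inferInstance)) ?_
              rw [show negStep (W.nil S) (𝟙 S) (x ≫ u)
                  = apS (W.nil S) (inv (𝟙 S) ≫ x ≫ u) from by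
                unfold negStep; rw [dif_pos (inferInstance : IsIso (𝟙 S))]]
              have h5 : inv (𝟙 S) ≫ x ≫ u = x ≫ u := by simp
              rw [h5, apS, dif_neg hxu]
              exact pos_letter_shift _ x hu
          | pos v₂ x₂ => cases hw
          | neg v₂ y₂ =>
              have hcop : LCop y₂ x := by cases hw with | pos_neg _ _ h => exact h
              have hy₂ : ¬ IsIso y₂ := by
                cases hw with | pos_neg h _ _ => exact red_neg_letter h
              rw [show appendNegRaw (W.neg v₂ y₂) (n.q₂ ≫ inv n.q₁)
                  = W.neg v₂ ((n.q₂ ≫ inv n.q₁) ≫ y₂) from rfl]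
              show RRel (negStep v₂
                (mcld hh ((n.q₂ ≫ inv n.q₁) ≫ y₂) (b ≫ u)).q₁
                (mcld hh ((n.q₂ ≫ inv n.q₁) ≫ y₂) (b ≫ u)).q₂) _
              refine RRel.trans' (negStep_spec hh v₂
                (D := n.q₂ ≫ inv n.q₁) (f₁ := y₂) (f₂ := x ≫ u)
                rfl hbu' (LCop_unit_right hcop hu rfl)) ?_
              rw [show negStep v₂ y₂ (x ≫ u)
                  = ⟨W.pos (W.neg v₂ y₂) (x ≫ u), 𝟙 T, inferInstance⟩ from by
                unfold negStep; rw [dif_neg hy₂, dif_neg hxu]]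
              exact pos_letter_shift _ x hu
        · rw [show posStep v n.q₁ n.q₂
              = ⟨W.neg (W.pos v n.q₁) n.q₂, 𝟙 T', inferInstance⟩ from by
            unfold posStep; rw [dif_neg h2, dif_neg h1]]
          rw [tPos_unfold,
            dif_neg (show ¬ IsIso (𝟙 T' ≫ b ≫ u) by simpa using hbu),
            Category.id_comp]
          show RRel (negStep (W.pos v n.q₁)
            (mcld hh n.q₂ (b ≫ u)).q₁ (mcld hh n.q₂ (b ≫ u)).q₂) _
          have hbu'' : b ≫ u = n.q₂ ≫ (n.d ≫ u) := by
            have h0 := congrArg (fun z => z ≫ u) n.h₂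
            rw [h0]
            simp only [Category.assoc]
          refine RRel.trans' (negStep_spec hh (W.pos v n.q₁)
            (D := n.q₂) (f₁ := 𝟙 _) (f₂ := n.d ≫ u)
            (by simp) hbu'' (LCop_of_iso_left hh inferInstance)) ?_
          rw [show negStep (W.pos v n.q₁) (𝟙 n.mid) (n.d ≫ u)
              = apS (W.pos v n.q₁) (inv (𝟙 n.mid) ≫ n.d ≫ u) from by
            unfold negStep; rw [dif_pos (inferInstance : IsIso (𝟙 n.mid))]]
          have h5 : inv (𝟙 n.mid) ≫ n.d ≫ u = n.d ≫ u := by simp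
          rw [h5]
          by_cases hd : IsIso (n.d ≫ u)
          · rw [apS, dif_pos hd]
            have hnd : IsIso n.d := by
              have h0 : n.d = (n.d ≫ u) ≫ inv u := by simp
              rw [h0]; haveI := hd; infer_instance
            refine RRel.mk (Sh.pos (Sh.refl v) hnd ?_) rfl
            rw [Category.id_comp]
            exact n.h₁.symm
          · rw [apS, dif_neg hd]
            rw [show appendPosRaw (W.pos v n.q₁) (n.d ≫ u)
                = W.pos v (n.q₁ ≫ n.d ≫ u) from rfl]
            have h6 : n.q₁ ≫ n.d ≫ u = x ≫ u := by
              rw [← Category.assoc, ← n.h₁]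
            rw [h6]
            exact pos_letter_shift v x hu

theorem tPos_tNeg (hh : Hyp C) {S T T' : C} (a : T' ⟶ T) (p : RP S T)
    (hp : Red p.w) : RRel (tPos hh a (tNeg hh a p)) p := by
  obtain ⟨w, u, hu⟩ := p
  have hp' : Red w := hp
  haveI := hu
  rw [tNeg_unfold]
  by_cases hb : IsIso (a ≫ inv u)
  · rw [dif_pos hb]
    haveI := hb
    have ha : IsIso a := by
      have h0 : a = (a ≫ inv u) ≫ u := by simp
      rw [h0]; infer_instance
    haveI := ha
    rw [tPos_unfold]
    have h8 : inv (a ≫ inv u) ≫ a = u := by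
      have h9 : inv (a ≫ inv u) = u ≫ inv a := IsIso.inv_eq_of_hom_inv_id (by simp)
      rw [h9]; simp
    rw [dif_pos (show IsIso (inv (a ≫ inv u) ≫ a) from by rw [h8]; exact hu)]
    refine RRel.mk (Sh.refl w) ?_
    rw [Category.id_comp, h8]
  · rw [dif_neg hb]
    rw [show tPos hh a (mulNeg hh w (a ≫ inv u))
        = tPos hh ((a ≫ inv u) ≫ u) (mulNeg hh w (a ≫ inv u)) from by
      rw [show (a ≫ inv u) ≫ u = a from by simp]]
    exact mulNeg_tPos hh hp' hb u hu

/-! ### Inverse law: tNeg after tPos -/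

theorem neg_letter_shift' {S A B T : C} (v : W S A) (y : B ⟶ A) {u : B ⟶ T}
    (hu : IsIso u) :
    RRel (⟨W.neg v (inv u ≫ y), 𝟙 T, inferInstance⟩ : RP S T) ⟨W.neg v y, u, hu⟩ := by
  haveI := hu
  refine RRel.mk (Sh.neg (Sh.refl v) (inferInstance : IsIso (inv u)) (by simp))
    (by simp)

theorem mulNeg_letter (hh : Hyp C) {S A B T : C} {v : W S A} {y : B ⟶ A}
    (hw : Red (W.neg v y)) {u : B ⟶ T} (hu : IsIso u) :
    RRel (mulNeg hh v (inv u ≫ y)) ⟨W.neg v y, u, hu⟩ := by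
  haveI := hu
  have hyn : ¬ IsIso y := red_neg_letter hw
  have hyu : ¬ IsIso (inv u ≫ y) := not_isIso_comp_right hh hyn
  cases v with
  | nil =>
      rw [mulNeg_npe hh (npe_nil S) (inv u ≫ y), appendNegRaw_nne (nne_nil S)]
      exact neg_letter_shift' _ y hu
  | neg v₂ y₂ => cases hw
  | pos v₂ x₂ =>
      have hcop : RCop x₂ y := by cases hw with | neg_pos _ _ h => exact h
      have hx₂ : ¬ IsIso x₂ := by
        cases hw with | neg_pos h _ _ => exact red_pos_letter h
      show RRel (posStep v₂ (mcrd hh x₂ (inv u ≫ y)).q₁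
        (mcrd hh x₂ (inv u ≫ y)).q₂) _
      refine RRel.trans' (posStep_spec hh v₂ (D := 𝟙 _) (f₁ := x₂) (f₂ := inv u ≫ y)
        (by simp) (by simp) (RCop_unit_left hcop (inferInstance : IsIso (inv u)) rfl)) ?_
      rw [show posStep v₂ x₂ (inv u ≫ y)
          = ⟨W.neg (W.pos v₂ x₂) (inv u ≫ y), 𝟙 _, inferInstance⟩ from by
        unfold posStep; rw [dif_neg hyu, dif_neg hx₂]]
      exact neg_letter_shift' _ y hu

theorem mulPos_tNeg (hh : Hyp C) {S A T' T : C} {w : W S A} (hw : Red w)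
    {c : A ⟶ T'} (hc : ¬ IsIso c) (u : A ⟶ T) (hu : IsIso u) :
    RRel (tNeg hh (inv u ≫ c) (mulPos hh w c)) ⟨w, u, hu⟩ := by
  haveI := hu
  have huc : ¬ IsIso (inv u ≫ c) := not_isIso_comp_right hh hc
  have hsimp1 : (inv u ≫ c) ≫ inv (𝟙 T') = inv u ≫ c := by simp
  cases w with
  | nil =>
      rw [show mulPos hh (W.nil S) c = ⟨W.pos (W.nil S) c, 𝟙 T', inferInstance⟩
          from rfl, tNeg_unfold, hsimp1, dif_neg huc]
      show RRel (posStep (W.nil S) (mcrd hh c (inv u ≫ c)).q₁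
        (mcrd hh c (inv u ≫ c)).q₂) _
      refine RRel.trans' (posStep_spec hh (W.nil S) (D := c) (f₁ := 𝟙 S)
        (f₂ := inv u) (by simp) rfl (RCop_of_iso_left hh inferInstance)) ?_
      rw [show posStep (W.nil S) (𝟙 S) (inv u)
          = apS (W.nil S) (𝟙 S ≫ inv (inv u)) from by
        unfold posStep; rw [dif_pos (inferInstance : IsIso (inv u))]]
      have h5 : 𝟙 S ≫ inv (inv u) = u := by simp
      rw [h5, apS, dif_pos hu]
      exact RRel.refl' _
  | pos v x =>
      have hxn : ¬ IsIso x := red_pos_letter hw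
      have hxu : ¬ IsIso (x ≫ u) := not_isIso_comp_left hh hxn
      rw [show mulPos hh (W.pos v x) c = ⟨W.pos v (x ≫ c), 𝟙 T', inferInstance⟩
          from rfl, tNeg_unfold, hsimp1, dif_neg huc]
      show RRel (posStep v (mcrd hh (x ≫ c) (inv u ≫ c)).q₁
        (mcrd hh (x ≫ c) (inv u ≫ c)).q₂) _
      refine RRel.trans' (posStep_spec hh v (D := inv u ≫ c) (f₁ := x ≫ u)
        (f₂ := 𝟙 T) ?_ (by simp) (RCop_of_iso_right hh inferInstance)) ?_
      · simp
      rw [show posStep v (x ≫ u) (𝟙 T) = apS v ((x ≫ u) ≫ inv (𝟙 T)) from by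
        unfold posStep; rw [dif_pos (inferInstance : IsIso (𝟙 T))]]
      have h5 : (x ≫ u) ≫ inv (𝟙 T) = x ≫ u := by simp
      rw [h5, apS, dif_neg hxu, appendPosRaw_npe (npe_of_red_pos hw)]
      exact pos_letter_shift v x hu
  | neg v y =>
      have hyn : ¬ IsIso y := red_neg_letter hw
      set m := mcld hh y c with hm
      rw [show mulPos hh (W.neg v y) c = negStep v m.q₁ m.q₂ from rfl]
      by_cases h1 : IsIso m.q₁
      · haveI := h1
        have hkey : y ≫ (inv m.q₁ ≫ m.q₂) = c := by
          have h0 : (m.d ≫ m.q₁) ≫ inv m.q₁ ≫ m.q₂ = m.d ≫ m.q₂ := by simp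
          rwa [← m.h₁, ← m.h₂] at h0
        rw [show negStep v m.q₁ m.q₂ = apS v (inv m.q₁ ≫ m.q₂) from by
          unfold negStep; rw [dif_pos h1]]
        by_cases h3 : IsIso (inv m.q₁ ≫ m.q₂)
        · haveI := h3
          have hb : (inv u ≫ c) ≫ inv (inv m.q₁ ≫ m.q₂) = inv u ≫ y := by
            have h0 : (inv u ≫ (y ≫ (inv m.q₁ ≫ m.q₂))) ≫ inv (inv m.q₁ ≫ m.q₂)
                = inv u ≫ y := by simp
            rwa [hkey] at h0
          rw [apS, dif_pos h3, tNeg_unfold, hb, dif_neg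
            (show ¬ IsIso (inv u ≫ y) from not_isIso_comp_right hh hyn)]
          exact mulNeg_letter hh hw hu
        · have hbn : ¬ IsIso (inv u ≫ c) := huc
          rw [apS, dif_neg h3, tNeg_unfold, hsimp1, dif_neg hbn]
          -- mulNeg (appendPosRaw v e) (inv u ≫ c)
          cases v with
          | nil =>
              rw [appendPosRaw_npe (npe_nil S)]
              show RRel (posStep (W.nil S)
                (mcrd hh (inv m.q₁ ≫ m.q₂) (inv u ≫ c)).q₁
                (mcrd hh (inv m.q₁ ≫ m.q₂) (inv u ≫ c)).q₂) _
              have h₂ : inv u ≫ c = (inv u ≫ y) ≫ (inv m.q₁ ≫ m.q₂) := by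
                have h0 : inv u ≫ (y ≫ (inv m.q₁ ≫ m.q₂))
                    = (inv u ≫ y) ≫ (inv m.q₁ ≫ m.q₂) := by
                  simp only [Category.assoc]
                rwa [hkey] at h0
              refine RRel.trans' (posStep_spec hh (W.nil S)
                (D := inv m.q₁ ≫ m.q₂) (f₁ := 𝟙 S) (f₂ := inv u ≫ y)
                (by simp) h₂ (RCop_of_iso_left hh inferInstance)) ?_
              rw [show posStep (W.nil S) (𝟙 S) (inv u ≫ y)
                  = ⟨appendNegRaw (W.nil S) ((inv u ≫ y) ≫ inv (𝟙 S)), 𝟙 T,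
                    inferInstance⟩ from by
                unfold posStep
                rw [dif_neg (not_isIso_comp_right hh hyn),
                  dif_pos (inferInstance : IsIso (𝟙 S))]]
              have h5 : (inv u ≫ y) ≫ inv (𝟙 S) = inv u ≫ y := by simp
              rw [h5, appendNegRaw_nne (nne_nil S)]
              exact neg_letter_shift' _ y hu
          | pos v₂ x₂ =>
              have hcop : RCop x₂ y := by cases hw with | neg_pos _ _ h => exact h
              have hx₂ : ¬ IsIso x₂ := by
                cases hw with | neg_pos h _ _ => exact red_pos_letter h
              rw [show appendPosRaw (W.pos v₂ x₂) (inv m.q₁ ≫ m.q₂)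
                  = W.pos v₂ (x₂ ≫ (inv m.q₁ ≫ m.q₂)) from rfl]
              show RRel (posStep v₂
                (mcrd hh (x₂ ≫ (inv m.q₁ ≫ m.q₂)) (inv u ≫ c)).q₁
                (mcrd hh (x₂ ≫ (inv m.q₁ ≫ m.q₂)) (inv u ≫ c)).q₂) _
              have h₂ : inv u ≫ c = (inv u ≫ y) ≫ (inv m.q₁ ≫ m.q₂) := by
                have h0 : inv u ≫ (y ≫ (inv m.q₁ ≫ m.q₂))
                    = (inv u ≫ y) ≫ (inv m.q₁ ≫ m.q₂) := by
                  simp only [Category.assoc]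
                rwa [hkey] at h0
              refine RRel.trans' (posStep_spec hh v₂
                (D := inv m.q₁ ≫ m.q₂) (f₁ := x₂) (f₂ := inv u ≫ y)
                rfl h₂ (RCop_unit_left hcop (inferInstance : IsIso (inv u)) rfl)) ?_
              rw [show posStep v₂ x₂ (inv u ≫ y)
                  = ⟨W.neg (W.pos v₂ x₂) (inv u ≫ y), 𝟙 T, inferInstance⟩ from by
                unfold posStep
                rw [dif_neg (not_isIso_comp_right hh hyn), dif_neg hx₂]]
              exact neg_letter_shift' _ y hu
          | neg v₂ y₂ => exact absurd (nne_of_red_neg hw) (by exact id)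
      · by_cases h2 : IsIso m.q₂
        · haveI := h2
          rw [show negStep v m.q₁ m.q₂
              = ⟨W.neg v (inv m.q₂ ≫ m.q₁), 𝟙 T', inferInstance⟩ from by
            unfold negStep; rw [dif_neg h1, dif_pos h2]]
          rw [tNeg_unfold, hsimp1, dif_neg huc]
          rw [show mulNeg hh (W.neg v (inv m.q₂ ≫ m.q₁)) (inv u ≫ c)
              = ⟨W.neg v ((inv u ≫ c) ≫ (inv m.q₂ ≫ m.q₁)), 𝟙 T, inferInstance⟩
              from rfl]
          have harr : (inv u ≫ c) ≫ (inv m.q₂ ≫ m.q₁) = inv u ≫ y := by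
            have h0 : (inv u ≫ (m.d ≫ m.q₂)) ≫ (inv m.q₂ ≫ m.q₁)
                = inv u ≫ (m.d ≫ m.q₁) := by simp
            rwa [← m.h₂, ← m.h₁] at h0
          rw [harr]
          exact neg_letter_shift' _ y hu
        · rw [show negStep v m.q₁ m.q₂
              = ⟨W.pos (W.neg v m.q₁) m.q₂, 𝟙 T', inferInstance⟩ from by
            unfold negStep; rw [dif_neg h1, dif_neg h2]]
          rw [tNeg_unfold, hsimp1, dif_neg huc]
          show RRel (posStep (W.neg v m.q₁)
            (mcrd hh m.q₂ (inv u ≫ c)).q₁ (mcrd hh m.q₂ (inv u ≫ c)).q₂) _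
          have h₂ : inv u ≫ c = (inv u ≫ m.d) ≫ m.q₂ := by
            have h0 : inv u ≫ (m.d ≫ m.q₂) = (inv u ≫ m.d) ≫ m.q₂ := by
              simp only [Category.assoc]
            rwa [← m.h₂] at h0
          refine RRel.trans' (posStep_spec hh (W.neg v m.q₁)
            (D := m.q₂) (f₁ := 𝟙 _) (f₂ := inv u ≫ m.d)
            (by simp) h₂ (RCop_of_iso_left hh inferInstance)) ?_
          by_cases hd : IsIso (inv u ≫ m.d)
          · rw [show posStep (W.neg v m.q₁) (𝟙 m.mid) (inv u ≫ m.d)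
                = apS (W.neg v m.q₁) (𝟙 m.mid ≫ inv (inv u ≫ m.d)) from by
              unfold posStep; rw [dif_pos hd]]
            haveI := hd
            have hmd : IsIso m.d := by
              have h0 : m.d = u ≫ (inv u ≫ m.d) := by simp
              rw [h0]; infer_instance
            haveI := hmd
            have h5 : 𝟙 m.mid ≫ inv (inv u ≫ m.d) = inv (inv u ≫ m.d) := by simp
            rw [h5, apS, dif_pos (inferInstance : IsIso (inv (inv u ≫ m.d)))]
            have h6 : inv (inv u ≫ m.d) = inv m.d ≫ u :=
              IsIso.inv_eq_of_hom_inv_id (by simp)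
            have hsh : inv m.d ≫ (m.d ≫ m.q₁) = m.q₁ ≫ 𝟙 _ := by simp
            rw [← m.h₁] at hsh
            exact RRel.mk (Sh.neg (Sh.refl v) (inferInstance : IsIso (inv m.d)) hsh)
              h6.symm
          · rw [show posStep (W.neg v m.q₁) (𝟙 m.mid) (inv u ≫ m.d)
                = ⟨appendNegRaw (W.neg v m.q₁) ((inv u ≫ m.d) ≫ inv (𝟙 m.mid)),
                  𝟙 T, inferInstance⟩ from by
              unfold posStep
              rw [dif_neg hd, dif_pos (inferInstance : IsIso (𝟙 m.mid))]]
            have h5 : (inv u ≫ m.d) ≫ inv (𝟙 m.mid) = inv u ≫ m.d := by simp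
            rw [h5, show appendNegRaw (W.neg v m.q₁) (inv u ≫ m.d)
                = W.neg v ((inv u ≫ m.d) ≫ m.q₁) from rfl]
            have h6 : (inv u ≫ m.d) ≫ m.q₁ = inv u ≫ y := by
              have h0 : (inv u ≫ m.d) ≫ m.q₁ = inv u ≫ (m.d ≫ m.q₁) := by
                simp only [Category.assoc]
              rwa [← m.h₁] at h0
            rw [h6]
            exact neg_letter_shift' _ y hu

theorem tNeg_tPos (hh : Hyp C) {S T T' : C} (a : T ⟶ T') (p : RP S T)
    (hp : Red p.w) : RRel (tNeg hh a (tPos hh a p)) p := by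
  obtain ⟨w, u, hu⟩ := p
  have hp' : Red w := hp
  haveI := hu
  rw [tPos_unfold]
  by_cases hc : IsIso (u ≫ a)
  · rw [dif_pos hc, tNeg_unfold]
    haveI := hc
    have ha : IsIso a := by
      have h0 : a = inv u ≫ (u ≫ a) := by simp
      rw [h0]; infer_instance
    haveI := ha
    have h8 : a ≫ inv (u ≫ a) = inv u := by
      have h9 : inv (u ≫ a) = inv a ≫ inv u := by simp
      rw [h9, ← Category.assoc]
      simp
    rw [dif_pos (show IsIso (a ≫ inv (u ≫ a)) from by rw [h8]; infer_instance)]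
    have h10 : inv (a ≫ inv (u ≫ a)) = u := by
      refine IsIso.inv_eq_of_hom_inv_id ?_
      rw [h8]
      simp
    refine RRel.mk (Sh.refl w) ?_
    rw [Category.id_comp, h10]
  · rw [dif_neg hc]
    rw [show tNeg hh a (mulPos hh w (u ≫ a))
        = tNeg hh (inv u ≫ (u ≫ a)) (mulPos hh w (u ≫ a)) from by
      rw [show inv u ≫ u ≫ a = a from by simp]]
    exact mulPos_tNeg hh hp' hc u hu

theorem red_tPos (hh : Hyp C) {S T T' : C} (a : T ⟶ T') (p : RP S T)
    (hp : Red p.w) : Red (tPos hh a p).w := by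
  unfold tPos
  by_cases h : IsIso (p.u ≫ a)
  · rw [dif_pos h]; exact hp
  · rw [dif_neg h]; exact red_mulPos hh hp h

theorem red_tNeg (hh : Hyp C) {S T T' : C} (a : T' ⟶ T) (p : RP S T)
    (hp : Red p.w) : Red (tNeg hh a p).w := by
  unfold tNeg
  letI := p.hu
  by_cases h : IsIso (a ≫ inv p.u)
  · rw [dif_pos h]; exact hp
  · rw [dif_neg h]; exact red_mulNeg hh hp h


/-! ### The groupoid and the functor -/

/-- A pointed reduced word: carrier for the action. -/
structure PT (T : C) : Type (max u v) where
  {src : C}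
  p : RP src T
  hp : Red p.w

inductive PTRel {T : C} : PT T → PT T → Prop
  | mk {S : C} {p q : RP S T} (hp : Red p.w) (hq : Red q.w) (h : RRel p q) :
      PTRel ⟨p, hp⟩ ⟨q, hq⟩

theorem PTRel.refl'' {T : C} (x : PT T) : PTRel x x := by
  obtain ⟨p, hp⟩ := x
  exact PTRel.mk hp hp (RRel.refl' p)

theorem PTRel.symm'' {T : C} {x y : PT T} (h : PTRel x y) : PTRel y x := by
  cases h with
  | mk hp hq h => exact PTRel.mk hq hp h.symm'

theorem PTRel.trans'' {T : C} {x y z : PT T} (h1 : PTRel x y) (h2 : PTRel y z) :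
    PTRel x z := by
  cases h1 with
  | mk hp hq h =>
      cases h2 with
      | mk hq' hr h' => exact PTRel.mk hp hr (h.trans' h')

instance ptSetoid (T : C) : Setoid (PT T) :=
  ⟨PTRel, PTRel.refl'', PTRel.symm'', PTRel.trans''⟩

/-- The carrier set at an object. -/
def SS (T : C) : Type (max u v) := Quotient (ptSetoid T)

noncomputable def tPosQ (hh : Hyp C) {T T' : C} (a : T ⟶ T') : SS T → SS T' :=
  Quotient.map (fun x => ⟨tPos hh a x.p, red_tPos hh a x.p x.hp⟩) (by
    intro x y hxy
    cases hxy with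
    | mk hp hq h => exact PTRel.mk _ _ (tPos_congr hh a h))

noncomputable def tNegQ (hh : Hyp C) {T T' : C} (a : T' ⟶ T) : SS T → SS T' :=
  Quotient.map (fun x => ⟨tNeg hh a x.p, red_tNeg hh a x.p x.hp⟩) (by
    intro x y hxy
    cases hxy with
    | mk hp hq h => exact PTRel.mk _ _ (tNeg_congr hh a h))

noncomputable def actE (hh : Hyp C) {T T' : C} (a : T ⟶ T') : SS T ≃ SS T' where
  toFun := tPosQ hh a
  invFun := tNegQ hh a
  left_inv := by
    intro s
    induction s using Quotient.inductionOn with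
    | h x =>
        obtain ⟨p, hp⟩ := x
        exact Quotient.sound (PTRel.mk _ _ (tNeg_tPos hh a p hp))
  right_inv := by
    intro s
    induction s using Quotient.inductionOn with
    | h x =>
        obtain ⟨p, hp⟩ := x
        exact Quotient.sound (PTRel.mk _ _ (tPos_tNeg hh a p hp))

/-- Objects of the target groupoid. -/
structure HO (C : Type u) [Category.{v} C] : Type (max u v) where
  base : C

noncomputable instance hoGroupoid : Groupoid.{max u v} (HO C) where
  Hom P Q := SS P.base ≃ SS Q.base
  id P := Equiv.refl _
  comp f g := f.trans g
  id_comp f := Equiv.refl_trans f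
  comp_id f := Equiv.trans_refl f
  assoc f g h := Equiv.trans_assoc f g h
  inv f := f.symm
  inv_comp f := Equiv.symm_trans_self f
  comp_inv f := Equiv.self_trans_symm f

/-- The action functor. -/
noncomputable def FF (hh : Hyp C) : C ⥤ HO C where
  obj X := ⟨X⟩
  map {X Y} f := actE hh f
  map_id X := by
    refine Equiv.ext ?_
    intro s
    induction s using Quotient.inductionOn with
    | h x =>
        obtain ⟨p, hp⟩ := x
        refine Quotient.sound (PTRel.mk _ _ ?_)
        obtain ⟨w, u, hu⟩ := p
        rw [tPos_unfold, dif_pos (show IsIso (u ≫ 𝟙 X) from by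
          haveI := hu; rw [Category.comp_id]; exact hu)]
        exact RRel.mk (Sh.refl w) (by simp)
  map_comp {X Y Z} f g := by
    refine Equiv.ext ?_
    intro s
    induction s using Quotient.inductionOn with
    | h x =>
        obtain ⟨p, hp⟩ := x
        exact Quotient.sound (PTRel.mk _ _ (tPos_comp hh f g p hp).symm')

theorem FF_faithful (hh : Hyp C) {X Y : C} (f g : X ⟶ Y)
    (h : (FF hh).map f = (FF hh).map g) : f = g := by
  have h' : actE hh f = actE hh g := h
  have hbase : actE hh f (Quotient.mk _ ⟨⟨W.nil X, 𝟙 X, inferInstance⟩, Red.nil X⟩)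
      = actE hh g (Quotient.mk _ ⟨⟨W.nil X, 𝟙 X, inferInstance⟩, Red.nil X⟩) := by
    rw [h']
  have hex := Quotient.exact hbase
  have hrr : RRel (tPos hh f ⟨W.nil X, 𝟙 X, inferInstance⟩)
      (tPos hh g ⟨W.nil X, 𝟙 X, inferInstance⟩) := by
    cases hex with
    | mk hp hq h => exact h
  rw [tPos_unfold, tPos_unfold] at hrr
  by_cases hf : IsIso (𝟙 X ≫ f) <;> by_cases hg : IsIso (𝟙 X ≫ g)
  · rw [dif_pos hf, dif_pos hg] at hrr
    cases hrr with
    | mk hs he =>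
        cases hs with
        | nil =>
            have h9 := he
            simp only [Category.id_comp] at h9
            exact h9.symm
  · rw [dif_pos hf, dif_neg hg] at hrr
    exact absurd hrr (by
      rw [show mulPos hh (W.nil X) (𝟙 X ≫ g)
          = ⟨W.pos (W.nil X) (𝟙 X ≫ g), 𝟙 Y, inferInstance⟩ from rfl]
      intro hc
      cases hc with
      | mk hs he => cases hs)
  · rw [dif_neg hf, dif_pos hg] at hrr
    exact absurd hrr (by
      rw [show mulPos hh (W.nil X) (𝟙 X ≫ f)
          = ⟨W.pos (W.nil X) (𝟙 X ≫ f), 𝟙 Y, inferInstance⟩ from rfl]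
      intro hc
      cases hc with
      | mk hs he => cases hs)
  · rw [dif_neg hf, dif_neg hg,
      show mulPos hh (W.nil X) (𝟙 X ≫ f)
          = ⟨W.pos (W.nil X) (𝟙 X ≫ f), 𝟙 Y, inferInstance⟩ from rfl,
      show mulPos hh (W.nil X) (𝟙 X ≫ g)
          = ⟨W.pos (W.nil X) (𝟙 X ≫ g), 𝟙 Y, inferInstance⟩ from rfl] at hrr
    cases hrr with
    | mk hs he =>
        cases hs with
        | pos hs' hiso' he' =>
            cases hs' with
            | nil =>
                have h1 := he
                have h2 := he'
                simp only [Category.id_comp, Category.comp_id] at h1 h2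
                rw [h1] at h2
                simpa using h2

end SRees

/-- Every skeletal Rees category embeds in its universal groupoid: if `C`
is a skeletal left Rees category which is also right cancellative, and `ι : C ⥤ G` is a
functor to a groupoid satisfying the universal property that every functor from `C` to a
groupoid factors uniquely through `ι`, then `ι` is faithful. -/
theorem skeletal_rees_embeds_in_universal_groupoid
    (h : IsLeftReesCategory C) (hsk : SkeletalCat C) (hRC : RightCancellativeCat C)
    {G : Type (max u v)} [Groupoid.{max u v} G] (ι : C ⥤ G)
    (huniv : ∀ {H : Type (max u v)} [Groupoid.{max u v} H] (F : C ⥤ H),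
        ∃! Θ : G ⥤ H, ι ⋙ Θ = F) :
    ι.Faithful := by
  have hh : SRees.Hyp C := ⟨h.1, h.2.1, h.2.2, hRC⟩
  obtain ⟨Θ, hΘ, -⟩ := huniv (SRees.FF hh)
  refine ⟨?_⟩
  intro X Y f g hfg
  have hf' := Functor.congr_hom hΘ f
  have hg' := Functor.congr_hom hΘ g
  rw [Functor.comp_map] at hf' hg'
  rw [hfg] at hf'
  have hcomb := hf'.symm.trans hg'
  have h2 : (SRees.FF hh).map f = (SRees.FF hh).map g := by
    have h3 := (cancel_epi (eqToHom (Functor.congr_obj hΘ X))).1 hcomb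
    exact (cancel_mono (eqToHom (Functor.congr_obj hΘ Y).symm)).1 h3
  exact SRees.FF_faithful hh f g h2
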